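/- arXiv:1206.2997 — 6 statements merged into one kernel-verified Lean document; each statement's English description precedes it below -/
import Mathlib

section
/- Let d ≥ 3 be an integer and let α, β, p be real numbers with α + β = d, β > 0, 1 < p < ∞, and p·max(α, 0) < d. Define the integral operator K acting on measurable functions f on (0,∞) by (Kf)(r) = ∫_{r}^{∞} r^{-α} (r')^{-β} f(r') (r')^{d-1} dr'. Then K is bounded on L^p((0,∞), r^{d-1} dr): there exists a constant C > 0 such that ‖Kf‖_{L^p((0,∞), r^{d-1}dr)} ≤ C·‖f‖_{L^p((0,∞), r^{d-1}dr)} for every f ∈ L^p((0,∞), r^{d-1} dr). -/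
open MeasureTheory Set
open scoped ENNReal NNReal

/-- The measure `r^{d-1} dr` on `(0,∞)` (with `dr` Lebesgue measure). -/
noncomputable def coneMeasure (d : ℕ) : Measure ℝ :=
  (volume.restrict (Ioi (0 : ℝ))).withDensity (fun r => ENNReal.ofReal (r ^ ((d : ℝ) - 1)))

lemma myTail (a c : ℝ) (ha : a < -1) (hc : 0 < c) :
    ∫⁻ r in Ioi c, ENNReal.ofReal (r ^ a) = ENNReal.ofReal (c ^ (a + 1) / (-(a + 1))) := by
  rw [← ofReal_integral_eq_lintegral_ofReal (integrableOn_Ioi_rpow_of_lt ha hc)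
      ((ae_restrict_iff' measurableSet_Ioi).2 (Filter.Eventually.of_forall fun x hx =>
        Real.rpow_nonneg (le_of_lt (hc.trans hx)) a)),
    integral_Ioi_rpow_of_lt ha hc, div_neg, neg_div]

lemma myHead (a c : ℝ) (ha : -1 < a) (hc : 0 < c) :
    ∫⁻ r in Ioo (0 : ℝ) c, ENNReal.ofReal (r ^ a) = ENNReal.ofReal (c ^ (a + 1) / (a + 1)) := by
  rw [Measure.restrict_congr_set Ioo_ae_eq_Ioc]
  have hint : IntegrableOn (fun x : ℝ => x ^ a) (Ioc 0 c) := by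
    have := intervalIntegral.intervalIntegrable_rpow' (a := 0) (b := c) ha
    rwa [intervalIntegrable_iff_integrableOn_Ioc_of_le hc.le] at this
  rw [← ofReal_integral_eq_lintegral_ofReal hint
      ((ae_restrict_iff' measurableSet_Ioc).2 (Filter.Eventually.of_forall fun x hx =>
        Real.rpow_nonneg hx.1.le a)),
    ← intervalIntegral.integral_of_le hc.le, integral_rpow (Or.inl ha),
    Real.zero_rpow (by linarith : a + 1 ≠ 0), sub_zero]

lemma mySwap (F : ℝ → ℝ → ℝ≥0∞) (hF : Measurable (Function.uncurry F)) :
    ∫⁻ r in Ioi (0 : ℝ), ∫⁻ r' in Ioi r, F r r' =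
      ∫⁻ r' in Ioi (0 : ℝ), ∫⁻ r in Ioo 0 r', F r r' := by
  set G : ℝ × ℝ → ℝ≥0∞ := fun x => if 0 < x.1 ∧ x.1 < x.2 then F x.1 x.2 else 0 with hG
  have hs : MeasurableSet {x : ℝ × ℝ | 0 < x.1 ∧ x.1 < x.2} :=
    (measurableSet_lt measurable_const measurable_fst).inter
      (measurableSet_lt measurable_fst measurable_snd)
  have hGm : Measurable G := Measurable.ite hs hF measurable_const
  have h1 : ∀ r : ℝ, (∫⁻ r', G (r, r')) =
      (Ioi (0:ℝ)).indicator (fun r => ∫⁻ r' in Ioi r, F r r') r := by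
    intro r
    by_cases hr : r ∈ Ioi (0:ℝ)
    · rw [indicator_of_mem hr, ← lintegral_indicator measurableSet_Ioi]
      refine lintegral_congr fun r' => ?_
      by_cases h' : r < r' <;>
        simp [hG, indicator, h', hr.out, mem_Ioi]
    · rw [indicator_of_notMem hr]
      have : ∀ r', G (r, r') = 0 := fun r' => if_neg (by
        simp only [mem_Ioi, not_lt] at hr
        rintro ⟨h1', h2'⟩; exact absurd h1' (not_lt.2 hr))
      simp [this]
  have h2 : ∀ r' : ℝ, (∫⁻ r, G (r, r')) =
      (Ioi (0:ℝ)).indicator (fun r' => ∫⁻ r in Ioo 0 r', F r r') r' := by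
    intro r'
    by_cases hr' : r' ∈ Ioi (0:ℝ)
    · rw [indicator_of_mem hr', ← lintegral_indicator measurableSet_Ioo]
      refine lintegral_congr fun r => ?_
      by_cases h1' : 0 < r <;> by_cases h2' : r < r' <;>
        simp [hG, indicator, h1', h2', mem_Ioo]
    · rw [indicator_of_notMem hr']
      have hz : ∀ r, G (r, r') = 0 := by
        intro r
        refine if_neg ?_
        simp only [mem_Ioi, not_lt] at hr'
        rintro ⟨h1', h2'⟩; linarith
      simp [hz]
  rw [← lintegral_indicator measurableSet_Ioi, ← lintegral_indicator measurableSet_Ioi]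
  simp_rw [← h1, ← h2]
  exact lintegral_lintegral_swap hGm.aemeasurable

set_option maxHeartbeats 2000000 in
lemma myMain (d : ℕ) (α β p : ℝ)
    (hαβ : α + β = d) (hβ : 0 < β) (hp1 : 1 < p) (hkey : α * (p - 1) < β) :
    ∃ C : ℝ, 0 < C ∧ ∀ f : ℝ → ℝ, Measurable f →
      eLpNorm (fun r : ℝ => ∫ r' in Ioi r, r ^ (-α) * r' ^ (-β) * f r' * r' ^ ((d : ℝ) - 1))
          (ENNReal.ofReal p) (coneMeasure d)
        ≤ ENNReal.ofReal C * eLpNorm f (ENNReal.ofReal p) (coneMeasure d) := by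
  have hp0 : 0 < p := by linarith
  have hp1' : 0 < p - 1 := by linarith
  set q : ℝ := p / (p - 1) with hqdef
  have hq0 : 0 < q := div_pos hp0 hp1'
  have hpq : p.HolderConjugate q := Real.holderConjugate_iff.2 ⟨hp1, by rw [hqdef]; field_simp; ring⟩
  have hsum : 1/p + 1/q = 1 := by
    rw [one_div, one_div]; exact hpq.inv_add_inv_eq_one
  have hpqsum : p + q = p * q := by
    field_simp at hsum; linarith
  set γ : ℝ := (α * (p - 1) + β) / (2 * p) with hγdef
  have hγq : α < γ * q := by
    have h : γ * q = (α * (p - 1) + β) / (2 * (p - 1)) := by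
      rw [hγdef, hqdef]; field_simp
    rw [h, lt_div_iff₀ (by linarith)]
    nlinarith
  have hγp : γ * p < β := by
    have h : γ * p = (α * (p - 1) + β) / 2 := by
      rw [hγdef]; field_simp
    rw [h, div_lt_iff₀ (by norm_num : (0:ℝ) < 2)]
    nlinarith
  set A : ℝ := γ * q - α with hAdef
  have hA : 0 < A := by simp only [hAdef]; linarith
  set B : ℝ := β - γ * p with hBdef
  have hB : 0 < B := by simp only [hBdef]; linarith
  set C : ℝ := (A⁻¹ ^ (p / q) * B⁻¹) ^ (1 / p) with hCdef
  have hApow : (0:ℝ) < A⁻¹ ^ (p / q) := Real.rpow_pos_of_pos (inv_pos.2 hA) _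
  have hC : 0 < C := Real.rpow_pos_of_pos (mul_pos hApow (inv_pos.2 hB)) _
  refine ⟨C, hC, fun f hf => ?_⟩
  set P : ℝ≥0∞ := ENNReal.ofReal p with hPdef
  have hP0 : P ≠ 0 := by
    simp [hPdef, ENNReal.ofReal_eq_zero, not_le, hp0]
  have hPt : P ≠ ∞ := ENNReal.ofReal_ne_top
  have htr : P.toReal = p := ENNReal.toReal_ofReal hp0.le
  set w : ℝ → ℝ≥0∞ := fun r => ENNReal.ofReal (r ^ ((d : ℝ) - 1)) with hwdef
  have hwm : Measurable w := by fun_prop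
  set σ : ℝ := α - 1 + γ * p with hσdef
  set δ : ℝ := (d : ℝ) - 1 - γ * p - α with hδdef
  set Kf : ℝ → ℝ :=
    fun r => ∫ r' in Ioi r, r ^ (-α) * r' ^ (-β) * f r' * r' ^ ((d : ℝ) - 1) with hKfdef
  set Nf : ℝ → ℝ≥0∞ := fun r' => (‖f r'‖₊ : ℝ≥0∞) with hNfdef
  -- eLpNorm as weighted lintegral
  have hNorm : ∀ g : ℝ → ℝ, eLpNorm g P (coneMeasure d) =
      (∫⁻ r in Ioi (0:ℝ), w r * (‖g r‖₊ : ℝ≥0∞) ^ p) ^ (1/p) := by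
    intro g
    rw [eLpNorm_eq_lintegral_rpow_enorm_toReal hP0 hPt, htr, coneMeasure,
      lintegral_withDensity_eq_lintegral_mul_non_measurable _ hwm
        (Filter.Eventually.of_forall fun x => ENNReal.ofReal_lt_top)]
    rfl

  -- pointwise Schur/Hölder bound
  have hNfTop : ∀ r' : ℝ, Nf r' ^ p ≠ ∞ :=
    fun r' => ENNReal.rpow_ne_top_of_nonneg hp0.le ENNReal.coe_ne_top
  have step1 : ∀ r : ℝ, 0 < r → (‖Kf r‖₊ : ℝ≥0∞) ^ p ≤
      ENNReal.ofReal (r ^ (-(γ * p)) * A⁻¹ ^ (p / q)) *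
        ∫⁻ r' in Ioi r, ENNReal.ofReal (r ^ (-α) * r' ^ σ) * Nf r' ^ p := by
    intro r hr
    set u : ℝ → ℝ≥0∞ := fun r' => ENNReal.ofReal (r ^ (-α/q) * r' ^ ((α-1)/q - γ)) with hudef
    set v : ℝ → ℝ≥0∞ := fun r' =>
      ENNReal.ofReal (r ^ (-α/p) * r' ^ ((α-1)/p + γ) * |f r'|) with hvdef
    set Jr : ℝ≥0∞ := ∫⁻ r' in Ioi r, ENNReal.ofReal (r ^ (-α) * r' ^ σ) * Nf r' ^ p with hJrdef
    have hu : Measurable u := by fun_prop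
    have hv : Measurable v := by fun_prop
    have hb1 : (‖Kf r‖₊ : ℝ≥0∞) ≤ ∫⁻ r' in Ioi r, (u * v) r' := by
      refine le_trans (enorm_integral_le_lintegral_enorm _) (le_of_eq ?_)
      refine setLIntegral_congr_fun measurableSet_Ioi
        (fun r' hr' => ?_)
      have hr'0 : 0 < r' := hr.trans hr'
      have e1 : r ^ (-α/q) * r ^ (-α/p) = r ^ (-α) := by
        rw [← Real.rpow_add hr]
        congr 1
        field_simp
        nlinarith [hpqsum]
      have e2 : r' ^ ((α-1)/q - γ) * r' ^ ((α-1)/p + γ) = r' ^ (α - 1) := by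
        rw [← Real.rpow_add hr'0]
        congr 1
        field_simp
        nlinarith [hpqsum]
      have e3 : r' ^ (-β) * r' ^ ((d:ℝ) - 1) = r' ^ (α - 1) := by
        rw [← Real.rpow_add hr'0]
        congr 1
        linarith
      simp only [Pi.mul_apply, hudef, hvdef]
      rw [Real.enorm_eq_ofReal_abs, ← ENNReal.ofReal_mul (by positivity)]
      congr 1
      rw [abs_mul, abs_mul, abs_mul,
          abs_of_pos (Real.rpow_pos_of_pos hr (-α)),
          abs_of_pos (Real.rpow_pos_of_pos hr'0 (-β)),
          abs_of_pos (Real.rpow_pos_of_pos hr'0 ((d:ℝ) - 1))]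
      calc r ^ (-α) * r' ^ (-β) * |f r'| * r' ^ ((d:ℝ)-1)
          = r ^ (-α) * ((r' ^ (-β) * r' ^ ((d:ℝ)-1)) * |f r'|) := by ring
        _ = r ^ (-α) * (r' ^ (α-1) * |f r'|) := by rw [e3]
        _ = (r ^ (-α/q) * r' ^ ((α-1)/q - γ)) *
              (r ^ (-α/p) * r' ^ ((α-1)/p + γ) * |f r'|) := by
            rw [← e1, ← e2]; ring
    have hI1 : ∫⁻ r' in Ioi r, u r' ^ q = ENNReal.ofReal (r ^ (-(γ*q)) * A⁻¹) := by
      have hpt : ∀ᵐ (r' : ℝ), r' ∈ Ioi r → u r' ^ q =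
          ENNReal.ofReal (r ^ (-α)) * ENNReal.ofReal (r' ^ (α - 1 - γ*q)) := by
        refine Filter.Eventually.of_forall fun r' hr' => ?_
        have hr'0 : 0 < r' := hr.trans hr'
        simp only [hudef]
        rw [ENNReal.ofReal_rpow_of_nonneg (by positivity) hq0.le,
            ← ENNReal.ofReal_mul (by positivity)]
        congr 1
        rw [Real.mul_rpow (by positivity) (by positivity),
            ← Real.rpow_mul hr.le, ← Real.rpow_mul hr'0.le,
            show -α/q*q = -α from by field_simp,
            show ((α-1)/q - γ)*q = α - 1 - γ*q from by field_simp]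
      rw [setLIntegral_congr_fun_ae measurableSet_Ioi hpt,
          lintegral_const_mul' _ _ ENNReal.ofReal_ne_top,
          myTail (α - 1 - γ*q) r (by linarith) hr,
          ← ENNReal.ofReal_mul (by positivity)]
      congr 1
      rw [show α - 1 - γ*q + 1 = α - γ*q from by ring,
          show -(α - γ*q) = A from by rw [hAdef]; ring,
          div_eq_mul_inv, ← mul_assoc, ← Real.rpow_add hr,
          show -α + (α - γ*q) = -(γ*q) from by ring]
    have hJ : ∫⁻ r' in Ioi r, v r' ^ p = Jr := by
      rw [hJrdef]
      refine setLIntegral_congr_fun measurableSet_Ioi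
        (fun r' hr' => ?_)
      have hr'0 : 0 < r' := hr.trans hr'
      simp only [hvdef, hNfdef]
      rw [← enorm_eq_nnnorm, Real.enorm_eq_ofReal_abs,
          ENNReal.ofReal_rpow_of_nonneg (by positivity) hp0.le,
          ENNReal.ofReal_rpow_of_nonneg (abs_nonneg _) hp0.le,
          ← ENNReal.ofReal_mul (by positivity)]
      congr 1
      rw [Real.mul_rpow (by positivity) (abs_nonneg _),
          Real.mul_rpow (by positivity) (by positivity),
          ← Real.rpow_mul hr.le, ← Real.rpow_mul hr'0.le,
          show -α/p*p = -α from by field_simp,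
          show ((α-1)/p + γ)*p = σ from by rw [hσdef]; field_simp]
    have holder := ENNReal.lintegral_mul_le_Lp_mul_Lq (volume.restrict (Ioi r)) hpq.symm
      hu.aemeasurable hv.aemeasurable
    have hKb : (‖Kf r‖₊ : ℝ≥0∞) ≤
        ENNReal.ofReal (r ^ (-γ) * A⁻¹ ^ (1/q)) * Jr ^ (1/p) := by
      refine hb1.trans (holder.trans ?_)
      rw [hI1, hJ]
      refine mul_le_mul_left (le_of_eq ?_) _
      rw [ENNReal.ofReal_rpow_of_nonneg (by positivity) (by positivity),
          Real.mul_rpow (by positivity) (inv_nonneg.2 hA.le),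
          ← Real.rpow_mul hr.le,
          show -(γ*q) * (1/q) = -γ from by field_simp]
    calc (‖Kf r‖₊ : ℝ≥0∞) ^ p
        ≤ (ENNReal.ofReal (r ^ (-γ) * A⁻¹ ^ (1/q)) * Jr ^ (1/p)) ^ p :=
          ENNReal.rpow_le_rpow hKb hp0.le
      _ = ENNReal.ofReal (r ^ (-(γ*p)) * A⁻¹ ^ (p/q)) * Jr := by
          rw [ENNReal.mul_rpow_of_nonneg _ _ hp0.le, ← ENNReal.rpow_mul,
              show 1/p*p = (1:ℝ) from by field_simp, ENNReal.rpow_one,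
              ENNReal.ofReal_rpow_of_nonneg (by positivity) hp0.le,
              Real.mul_rpow (by positivity) (Real.rpow_nonneg (inv_nonneg.2 hA.le) _),
              ← Real.rpow_mul hr.le,
              show -γ * p = -(γ*p) from by ring,
              ← Real.rpow_mul (inv_nonneg.2 hA.le),
              show 1/q * p = p/q from by ring]
  -- integrate the pointwise bound, swap, and compute
  have step2 : (∫⁻ r in Ioi (0:ℝ), w r * (‖Kf r‖₊:ℝ≥0∞) ^ p) ≤
      ENNReal.ofReal (A⁻¹ ^ (p/q)) *
        ∫⁻ r in Ioi (0:ℝ), ∫⁻ r' in Ioi r,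
          ENNReal.ofReal (r ^ δ) * (ENNReal.ofReal (r' ^ σ) * Nf r' ^ p) := by
    rw [← lintegral_const_mul' _ _ ENNReal.ofReal_ne_top]
    refine lintegral_mono_ae ((ae_restrict_iff' measurableSet_Ioi).2
      (Filter.Eventually.of_forall fun r hr => ?_))
    replace hr : (0:ℝ) < r := hr
    refine (mul_le_mul_right (step1 r hr) (w r)).trans (le_of_eq ?_)
    have hpull : (∫⁻ r' in Ioi r, ENNReal.ofReal (r ^ δ) *
          (ENNReal.ofReal (r' ^ σ) * Nf r' ^ p))
        = ENNReal.ofReal (r ^ δ) *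
          ∫⁻ r' in Ioi r, ENNReal.ofReal (r' ^ σ) * Nf r' ^ p :=
      lintegral_const_mul' _ _ ENNReal.ofReal_ne_top
    have hJsplit : (∫⁻ r' in Ioi r, ENNReal.ofReal (r ^ (-α) * r' ^ σ) * Nf r' ^ p)
        = ENNReal.ofReal (r ^ (-α)) *
          ∫⁻ r' in Ioi r, ENNReal.ofReal (r' ^ σ) * Nf r' ^ p := by
      rw [← lintegral_const_mul' _ _ ENNReal.ofReal_ne_top]
      refine lintegral_congr fun r' => ?_
      rw [ENNReal.ofReal_mul (by positivity), mul_assoc]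
    have hcomb : ENNReal.ofReal (r ^ ((d:ℝ)-1)) *
          ENNReal.ofReal (r ^ (-(γ*p)) * A⁻¹ ^ (p/q)) * ENNReal.ofReal (r ^ (-α))
        = ENNReal.ofReal (A⁻¹ ^ (p/q)) * ENNReal.ofReal (r ^ δ) := by
      rw [← ENNReal.ofReal_mul (by positivity), ← ENNReal.ofReal_mul (by positivity),
          ← ENNReal.ofReal_mul (Real.rpow_nonneg (inv_nonneg.2 hA.le) _)]
      congr 1
      calc r ^ ((d:ℝ)-1) * (r ^ (-(γ*p)) * A⁻¹ ^ (p/q)) * r ^ (-α)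
          = A⁻¹ ^ (p/q) * (r ^ ((d:ℝ)-1) * r ^ (-(γ*p)) * r ^ (-α)) := by ring
        _ = A⁻¹ ^ (p/q) * r ^ δ := by
            rw [← Real.rpow_add hr, ← Real.rpow_add hr,
                show (d:ℝ)-1 + -(γ*p) + -α = δ from by rw [hδdef]; ring]
    rw [hpull, hJsplit, hwdef]
    calc ENNReal.ofReal (r ^ ((d:ℝ)-1)) * (ENNReal.ofReal (r ^ (-(γ*p)) * A⁻¹ ^ (p/q)) *
            (ENNReal.ofReal (r ^ (-α)) * ∫⁻ r' in Ioi r, ENNReal.ofReal (r' ^ σ) * Nf r' ^ p))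
        = (ENNReal.ofReal (r ^ ((d:ℝ)-1)) * ENNReal.ofReal (r ^ (-(γ*p)) * A⁻¹ ^ (p/q)) *
            ENNReal.ofReal (r ^ (-α))) *
            (∫⁻ r' in Ioi r, ENNReal.ofReal (r' ^ σ) * Nf r' ^ p) := by ring
      _ = (ENNReal.ofReal (A⁻¹ ^ (p/q)) * ENNReal.ofReal (r ^ δ)) *
            (∫⁻ r' in Ioi r, ENNReal.ofReal (r' ^ σ) * Nf r' ^ p) := by rw [hcomb]
      _ = ENNReal.ofReal (A⁻¹ ^ (p/q)) * (ENNReal.ofReal (r ^ δ) *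
            ∫⁻ r' in Ioi r, ENNReal.ofReal (r' ^ σ) * Nf r' ^ p) := by ring
  have hFkm : Measurable (Function.uncurry (fun r r' : ℝ =>
      ENNReal.ofReal (r ^ δ) * (ENNReal.ofReal (r' ^ σ) * Nf r' ^ p))) := by
    simp only [hNfdef, Function.uncurry]
    fun_prop
  have step3 : (∫⁻ r in Ioi (0:ℝ), ∫⁻ r' in Ioi r,
        ENNReal.ofReal (r ^ δ) * (ENNReal.ofReal (r' ^ σ) * Nf r' ^ p))
      = ∫⁻ r' in Ioi (0:ℝ), ∫⁻ r in Ioo 0 r',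
        ENNReal.ofReal (r ^ δ) * (ENNReal.ofReal (r' ^ σ) * Nf r' ^ p) :=
    mySwap _ hFkm
  have step4 : (∫⁻ r' in Ioi (0:ℝ), ∫⁻ r in Ioo 0 r',
        ENNReal.ofReal (r ^ δ) * (ENNReal.ofReal (r' ^ σ) * Nf r' ^ p))
      = ENNReal.ofReal B⁻¹ * ∫⁻ r' in Ioi (0:ℝ), w r' * Nf r' ^ p := by
    rw [← lintegral_const_mul' _ _ ENNReal.ofReal_ne_top]
    refine setLIntegral_congr_fun measurableSet_Ioi
      (fun r' hr' => ?_)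
    replace hr' : (0:ℝ) < r' := hr'
    have hδ1 : δ + 1 = B := by simp only [hδdef, hBdef]; linarith
    rw [lintegral_mul_const' _ _ (ENNReal.mul_ne_top ENNReal.ofReal_ne_top (hNfTop r')),
        myHead δ r' (by simp only [hδdef]; linarith) hr', hδ1]
    have hcomb2 : ENNReal.ofReal (r' ^ B / B) * ENNReal.ofReal (r' ^ σ)
        = ENNReal.ofReal B⁻¹ * ENNReal.ofReal (r' ^ ((d:ℝ)-1)) := by
      rw [← ENNReal.ofReal_mul (by positivity),
          ← ENNReal.ofReal_mul (inv_nonneg.2 hB.le)]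
      congr 1
      rw [div_eq_mul_inv]
      calc r' ^ B * B⁻¹ * r' ^ σ = B⁻¹ * (r' ^ B * r' ^ σ) := by ring
        _ = B⁻¹ * r' ^ ((d:ℝ)-1) := by
            rw [← Real.rpow_add hr',
                show B + σ = (d:ℝ)-1 from by simp only [hBdef, hσdef]; linarith]
    calc ENNReal.ofReal (r' ^ B / B) * (ENNReal.ofReal (r' ^ σ) * Nf r' ^ p)
        = (ENNReal.ofReal (r' ^ B / B) * ENNReal.ofReal (r' ^ σ)) * Nf r' ^ p := by ring
      _ = (ENNReal.ofReal B⁻¹ * ENNReal.ofReal (r' ^ ((d:ℝ)-1))) * Nf r' ^ p := by rw [hcomb2]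
      _ = ENNReal.ofReal B⁻¹ * (w r' * Nf r' ^ p) := by rw [hwdef]; ring
  -- conclude
  rw [hNorm Kf, hNorm f]
  have htot : (∫⁻ r in Ioi (0:ℝ), w r * (‖Kf r‖₊:ℝ≥0∞) ^ p) ≤
      ENNReal.ofReal (A⁻¹ ^ (p/q) * B⁻¹) * ∫⁻ r' in Ioi (0:ℝ), w r' * Nf r' ^ p := by
    refine step2.trans (le_of_eq ?_)
    rw [step3, step4, ← mul_assoc,
        ← ENNReal.ofReal_mul (Real.rpow_nonneg (inv_nonneg.2 hA.le) _)]
  calc (∫⁻ r in Ioi (0:ℝ), w r * (‖Kf r‖₊:ℝ≥0∞) ^ p) ^ (1/p)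
      ≤ (ENNReal.ofReal (A⁻¹ ^ (p/q) * B⁻¹) *
          ∫⁻ r' in Ioi (0:ℝ), w r' * Nf r' ^ p) ^ (1/p) :=
        ENNReal.rpow_le_rpow htot (by positivity)
    _ = ENNReal.ofReal C * (∫⁻ r' in Ioi (0:ℝ), w r' * (‖f r'‖₊:ℝ≥0∞) ^ p) ^ (1/p) := by
        rw [ENNReal.mul_rpow_of_nonneg _ _ (by positivity : (0:ℝ) ≤ 1/p),
            ENNReal.ofReal_rpow_of_nonneg
              (mul_nonneg (Real.rpow_nonneg (inv_nonneg.2 hA.le) _) (inv_nonneg.2 hB.le))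
              (by positivity), ← hCdef, hNfdef]


/-- Let `d ≥ 3` be an integer and `α + β = d`, `β > 0`, `1 < p < ∞`,
`p·max(α,0) < d`. Then the operator `(Kf)(r) = ∫_r^∞ r^{-α} (r')^{-β} f(r') (r')^{d-1} dr'`
is bounded on `L^p((0,∞), r^{d-1} dr)`. -/
theorem statement1 (d : ℕ) (hd : 3 ≤ d) (α β p : ℝ)
    (hαβ : α + β = d) (hβ : 0 < β) (hp1 : 1 < p) (hp : p * max α 0 < d) :
    ∃ C : ℝ, 0 < C ∧ ∀ f : ℝ → ℝ, MemLp f (ENNReal.ofReal p) (coneMeasure d) →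
      eLpNorm (fun r : ℝ => ∫ r' in Ioi r, r ^ (-α) * r' ^ (-β) * f r' * r' ^ ((d : ℝ) - 1))
          (ENNReal.ofReal p) (coneMeasure d)
        ≤ ENNReal.ofReal C * eLpNorm f (ENNReal.ofReal p) (coneMeasure d) := by
  have hkey : α * (p - 1) < β := by
    rcases le_or_gt α 0 with h | h
    · nlinarith
    · rw [max_eq_left h.le] at hp
      nlinarith
  obtain ⟨C, hC, hbound⟩ := myMain d α β p hαβ hβ hp1 hkey
  refine ⟨C, hC, fun f hf => ?_⟩
  obtain ⟨g, hgm, hfg⟩ := hf.1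
  have hfg' : f =ᵐ[(volume.restrict (Ioi (0:ℝ))).withDensity
      (fun r => ENNReal.ofReal (r ^ ((d : ℝ) - 1)))] g := by
    rw [← coneMeasure]; exact hfg
  have hν : f =ᵐ[volume.restrict (Ioi (0:ℝ))] g := by
    have h1 : ∀ᵐ x ∂(volume.restrict (Ioi (0:ℝ))),
        ENNReal.ofReal (x ^ ((d:ℝ)-1)) ≠ 0 → f x = g x :=
      (ae_withDensity_iff (by fun_prop)).1 hfg'
    have h2 : ∀ᵐ x ∂(volume.restrict (Ioi (0:ℝ))), x ∈ Ioi (0:ℝ) :=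
      ae_restrict_mem measurableSet_Ioi
    filter_upwards [h1, h2] with x hx1 hx2
    refine hx1 ?_
    have : (0:ℝ) < x ^ ((d:ℝ)-1) := Real.rpow_pos_of_pos hx2 _
    simp [ENNReal.ofReal_eq_zero, not_le, this]
  have hμac : (coneMeasure d) ≪ volume.restrict (Ioi (0:ℝ)) := by
    rw [coneMeasure]; exact withDensity_absolutelyContinuous _ _
  have hmem : ∀ᵐ r ∂(coneMeasure d), r ∈ Ioi (0:ℝ) :=
    hμac.ae_le (ae_restrict_mem measurableSet_Ioi)
  have hKae : (fun r : ℝ => ∫ r' in Ioi r, r ^ (-α) * r' ^ (-β) * f r' * r' ^ ((d:ℝ)-1))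
      =ᵐ[coneMeasure d]
      (fun r : ℝ => ∫ r' in Ioi r, r ^ (-α) * r' ^ (-β) * g r' * r' ^ ((d:ℝ)-1)) := by
    filter_upwards [hmem] with r hr
    refine integral_congr_ae ?_
    have hsub : f =ᵐ[volume.restrict (Ioi r)] g :=
      ae_restrict_of_ae_restrict_of_subset (Ioi_subset_Ioi hr.out.le) hν
    filter_upwards [hsub] with r' h'
    rw [h']
  rw [eLpNorm_congr_ae hKae, eLpNorm_congr_ae hfg]
  exact hbound g hgm.measurable
end

section
/- Let d ≥ 3 be an integer, let (Ω, ν) be a finite measure space, and let α, β, p be real numbers with α + β = d, α > 0, and d/min(α, d) < p < ∞. Let K be a measurable kernel on ((0,∞)×Ω)² satisfying |K(r, y, r', y')| ≤ r^{-α} (r')^{-β} whenever r > r', and K(r, y, r', y') = 0 whenever r ≤ r'. Then the integral operator (Tf)(r, y) = ∫∫ K(r, y, r', y') f(r', y') (r')^{d-1} dr' dν(y') is bounded on L^p((0,∞)×Ω, r^{d-1} dr ⊗ ν): there exists C > 0 such that ‖Tf‖_p ≤ C‖f‖_p for all f in this L^p space. -/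
open MeasureTheory Set
open scoped ENNReal

namespace Statement4Aux

instance (d : ℕ) : SFinite (coneMeasure d) := by
  unfold coneMeasure
  infer_instance

lemma measurable_density (d : ℕ) :
    Measurable fun r : ℝ => ENNReal.ofReal (r ^ ((d : ℝ) - 1)) :=
  (measurable_id.pow_const _).ennreal_ofReal

lemma lintegral_coneMeasure (d : ℕ) {g : ℝ → ℝ≥0∞} (hg : Measurable g) :
    ∫⁻ r, g r ∂(coneMeasure d)
      = ∫⁻ r in Ioi (0:ℝ), ENNReal.ofReal (r ^ ((d : ℝ) - 1)) * g r := by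
  rw [coneMeasure, lintegral_withDensity_eq_lintegral_mul _ (measurable_density d) hg]
  rfl

lemma lint_Ioo {c R : ℝ} (hc : -1 < c) (hR : 0 < R) :
    ∫⁻ x in Ioo (0:ℝ) R, ENNReal.ofReal (x ^ c) = ENNReal.ofReal (R ^ (c + 1) / (c + 1)) := by
  have hc1 : (0:ℝ) < c + 1 := by linarith
  have hInt : IntegrableOn (fun x : ℝ => x ^ c) (Ioo (0:ℝ) R) := by
    have h := intervalIntegral.intervalIntegrable_rpow' (a := 0) (b := R) hc
    rw [intervalIntegrable_iff_integrableOn_Ioc_of_le hR.le] at h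
    exact h.mono_set Ioo_subset_Ioc_self
  rw [← ofReal_integral_eq_lintegral_ofReal hInt
      ((ae_restrict_iff' measurableSet_Ioo).2
        (ae_of_all _ fun x hx => Real.rpow_nonneg hx.1.le c))]
  rw [← integral_Ioc_eq_integral_Ioo, ← intervalIntegral.integral_of_le hR.le,
    integral_rpow (Or.inl hc), Real.zero_rpow hc1.ne', sub_zero]

lemma lint_Ioi {c R : ℝ} (hc : c < -1) (hR : 0 < R) :
    ∫⁻ x in Ioi R, ENNReal.ofReal (x ^ c) = ENNReal.ofReal (R ^ (c + 1) / (-(c + 1))) := by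
  have hInt := integrableOn_Ioi_rpow_of_lt hc hR
  rw [← ofReal_integral_eq_lintegral_ofReal hInt
      ((ae_restrict_iff' measurableSet_Ioi).2
        (ae_of_all _ fun x hx => Real.rpow_nonneg (hR.trans hx).le c))]
  rw [integral_Ioi_rpow_of_lt hc hR]
  congr 1
  rw [div_neg, neg_div]

lemma cone_Ioo (d : ℕ) {e R : ℝ} (he : 0 < e + d) (hR : 0 < R) :
    ∫⁻ r, (Ioo (0:ℝ) R).indicator (fun x => ENNReal.ofReal (x ^ e)) r ∂(coneMeasure d)
      = ENNReal.ofReal (R ^ (e + d) / (e + d)) := by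
  have hmeas : Measurable fun x : ℝ => ENNReal.ofReal (x ^ e) :=
    (measurable_id.pow_const _).ennreal_ofReal
  rw [lintegral_coneMeasure d (hmeas.indicator measurableSet_Ioo)]
  have heq : ∀ r ∈ Ioi (0:ℝ),
      ENNReal.ofReal (r ^ ((d:ℝ) - 1))
          * (Ioo (0:ℝ) R).indicator (fun x => ENNReal.ofReal (x ^ e)) r
        = (Ioo (0:ℝ) R).indicator (fun x => ENNReal.ofReal (x ^ (e + d - 1))) r := by
    intro r hr
    by_cases hrR : r ∈ Ioo (0:ℝ) R
    · rw [indicator_of_mem hrR, indicator_of_mem hrR,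
        ← ENNReal.ofReal_mul (Real.rpow_nonneg (le_of_lt hr) _), ← Real.rpow_add hr,
        show (d:ℝ) - 1 + e = e + (d:ℝ) - 1 by ring]
    · rw [indicator_of_notMem hrR, indicator_of_notMem hrR, mul_zero]
  rw [setLIntegral_congr_fun measurableSet_Ioi heq,
    lintegral_indicator measurableSet_Ioo,
    Measure.restrict_restrict measurableSet_Ioo,
    inter_eq_left.2 Ioo_subset_Ioi_self]
  have h := lint_Ioo (c := e + d - 1) (by linarith) hR
  rw [show e + (d:ℝ) - 1 + 1 = e + d by ring] at h
  exact h

lemma cone_Ioi (d : ℕ) {e R : ℝ} (he : e + d < 0) (hR : 0 < R) :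
    ∫⁻ r, (Ioi R).indicator (fun x => ENNReal.ofReal (x ^ e)) r ∂(coneMeasure d)
      = ENNReal.ofReal (R ^ (e + d) / (-(e + d))) := by
  have hmeas : Measurable fun x : ℝ => ENNReal.ofReal (x ^ e) :=
    (measurable_id.pow_const _).ennreal_ofReal
  rw [lintegral_coneMeasure d (hmeas.indicator measurableSet_Ioi)]
  have heq : ∀ r ∈ Ioi (0:ℝ),
      ENNReal.ofReal (r ^ ((d:ℝ) - 1))
          * (Ioi R).indicator (fun x => ENNReal.ofReal (x ^ e)) r
        = (Ioi R).indicator (fun x => ENNReal.ofReal (x ^ (e + d - 1))) r := by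
    intro r hr
    by_cases hrR : r ∈ Ioi R
    · rw [indicator_of_mem hrR, indicator_of_mem hrR,
        ← ENNReal.ofReal_mul (Real.rpow_nonneg (le_of_lt hr) _), ← Real.rpow_add hr,
        show (d:ℝ) - 1 + e = e + (d:ℝ) - 1 by ring]
    · rw [indicator_of_notMem hrR, indicator_of_notMem hrR, mul_zero]
  rw [setLIntegral_congr_fun measurableSet_Ioi heq,
    lintegral_indicator measurableSet_Ioi,
    Measure.restrict_restrict measurableSet_Ioi,
    inter_eq_left.2 (Ioi_subset_Ioi hR.le)]
  have h := lint_Ioi (c := e + d - 1) (by linarith) hR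
  rw [show e + (d:ℝ) - 1 + 1 = e + d by ring] at h
  exact h

lemma lintegral_prod_fst {Ω : Type*} [MeasurableSpace Ω] (ν : Measure Ω) [IsFiniteMeasure ν]
    (d : ℕ) {g : ℝ → ℝ≥0∞} (hg : Measurable g) :
    ∫⁻ z : ℝ × Ω, g z.1 ∂((coneMeasure d).prod ν)
      = (∫⁻ r, g r ∂(coneMeasure d)) * ν univ := by
  have hmg : AEMeasurable (fun z : ℝ × Ω => g z.1) ((coneMeasure d).prod ν) := by
    exact (hg.comp measurable_fst).aemeasurable
  rw [lintegral_prod _ hmg]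
  simp only [lintegral_const]
  rw [lintegral_mul_const _ hg]

lemma ae_fst_pos {Ω : Type*} [MeasurableSpace Ω] (ν : Measure Ω) [IsFiniteMeasure ν] (d : ℕ) :
    ∀ᵐ z : ℝ × Ω ∂((coneMeasure d).prod ν), 0 < z.1 := by
  have h0 : coneMeasure d (Iic 0) = 0 := by
    rw [coneMeasure]
    refine withDensity_absolutelyContinuous _ _ ?_
    rw [Measure.restrict_apply measurableSet_Iic]
    have : Ioi (0:ℝ) ∩ Iic 0 = ∅ := by
      ext x
      simp only [mem_inter_iff, mem_Ioi, mem_Iic, mem_empty_iff_false, iff_false, not_and]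
      intro h h'; linarith
    rw [inter_comm, this, measure_empty]
  rw [ae_iff]
  have hset : {z : ℝ × Ω | ¬ 0 < z.1} = (Iic 0) ×ˢ (univ : Set Ω) := by
    ext z; simp [not_lt]
  rw [hset, Measure.prod_prod, h0, zero_mul]

lemma schur_test {X : Type*} [MeasurableSpace X] (μ : Measure X) [SFinite μ]
    {k : X → X → ℝ≥0∞} (hk : Measurable (Function.uncurry k))
    {w : X → ℝ≥0∞} (hw : Measurable w) (hw0 : ∀ᵐ z ∂μ, w z ≠ 0 ∧ w z ≠ ∞)
    {p q : ℝ} (hpq : p.HolderConjugate q)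
    (A B : ℝ≥0∞)
    (hA : ∀ᵐ z ∂μ, ∫⁻ z', k z z' * (w z') ^ q ∂μ ≤ A * (w z) ^ q)
    (hB : ∀ᵐ z' ∂μ, ∫⁻ z, k z z' * (w z) ^ p ∂μ ≤ B * (w z') ^ p)
    {F : X → ℝ≥0∞} (hF : Measurable F) :
    ∫⁻ z, (∫⁻ z', k z z' * F z' ∂μ) ^ p ∂μ
      ≤ A ^ (p / q) * B * ∫⁻ z, (F z) ^ p ∂μ := by
  have hp0 : 0 < p := hpq.pos
  have hq0 : 0 < q := hpq.symm.pos
  set G : X → ℝ≥0∞ := fun z' => (F z') ^ p * ((w z')⁻¹) ^ p with hGdef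
  have hGmeas : Measurable G := (hF.pow_const _).mul (hw.inv.pow_const _)
  have hkG : Measurable (fun zz : X × X => k zz.1 zz.2 * G zz.2) :=
    hk.mul (hGmeas.comp measurable_snd)
  have hJmeas : Measurable fun z => ∫⁻ z', k z z' * G z' ∂μ :=
    Measurable.lintegral_prod_right (f := fun z z' => k z z' * G z') hkG
  have step1 : ∀ᵐ z ∂μ, (∫⁻ z', k z z' * F z' ∂μ) ^ p
      ≤ A ^ (p / q) * ((w z) ^ p * ∫⁻ z', k z z' * G z' ∂μ) := by
    filter_upwards [hA] with z hAz
    have hkz : Measurable fun z' => k z z' := hk.comp measurable_prodMk_left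
    have key : ∫⁻ z', k z z' * F z' ∂μ
        ≤ (∫⁻ z', k z z' * (w z') ^ q ∂μ) ^ (1/q)
            * (∫⁻ z', k z z' * G z' ∂μ) ^ (1/p) := by
      have hcong : ∀ᵐ z' ∂μ, k z z' * F z' =
          ((k z z') ^ (1/q) * w z') * ((k z z') ^ (1/p) * (F z' * (w z')⁻¹)) := by
        filter_upwards [hw0] with z' hw'
        have hk1 : (k z z') ^ (1/q) * (k z z') ^ (1/p) = k z z' := by
          rw [← ENNReal.rpow_add_of_nonneg _ _ (by positivity) (by positivity)]
          rw [show 1/q + 1/p = 1 by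
            rw [one_div, one_div, add_comm]; exact hpq.inv_add_inv_eq_one]
          exact ENNReal.rpow_one _
        calc k z z' * F z'
            = ((k z z') ^ (1/q) * (k z z') ^ (1/p)) * (F z' * ((w z')⁻¹ * w z')) := by
              rw [hk1, ENNReal.inv_mul_cancel hw'.1 hw'.2, mul_one]
          _ = _ := by ring
      rw [lintegral_congr_ae hcong]
      have hf1 : AEMeasurable (fun z' => (k z z') ^ (1/q) * w z') μ :=
        ((hkz.pow_const _).mul hw).aemeasurable
      have hf2 : AEMeasurable (fun z' => (k z z') ^ (1/p) * (F z' * (w z')⁻¹)) μ :=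
        ((hkz.pow_const _).mul (hF.mul hw.inv)).aemeasurable
      refine le_trans (ENNReal.lintegral_mul_le_Lp_mul_Lq μ hpq.symm hf1 hf2) ?_
      apply mul_le_mul' <;> apply le_of_eq <;> (congr 1) <;> apply lintegral_congr <;>
        intro z'
      · rw [ENNReal.mul_rpow_of_nonneg _ _ hq0.le, ← ENNReal.rpow_mul,
          one_div_mul_cancel hq0.ne', ENNReal.rpow_one]
      · rw [ENNReal.mul_rpow_of_nonneg _ _ hp0.le, ← ENNReal.rpow_mul,
          one_div_mul_cancel hp0.ne', ENNReal.rpow_one,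
          ENNReal.mul_rpow_of_nonneg _ _ hp0.le, hGdef]
    calc (∫⁻ z', k z z' * F z' ∂μ) ^ p
        ≤ ((A * (w z) ^ q) ^ (1/q) * (∫⁻ z', k z z' * G z' ∂μ) ^ (1/p)) ^ p := by
          apply ENNReal.rpow_le_rpow _ hp0.le
          exact key.trans
            (mul_le_mul_left (ENNReal.rpow_le_rpow hAz (by positivity)) _)
      _ = A ^ (p/q) * ((w z) ^ p * ∫⁻ z', k z z' * G z' ∂μ) := by
          rw [ENNReal.mul_rpow_of_nonneg _ _ hp0.le, ← ENNReal.rpow_mul,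
            ← ENNReal.rpow_mul, one_div_mul_cancel hp0.ne', ENNReal.rpow_one,
            show 1/q * p = p/q by ring,
            ENNReal.mul_rpow_of_nonneg _ _ (by positivity), ← ENNReal.rpow_mul,
            show q * (p/q) = p by field_simp, mul_assoc]
  have hwp : Measurable fun z => (w z) ^ p := hw.pow_const _
  calc ∫⁻ z, (∫⁻ z', k z z' * F z' ∂μ) ^ p ∂μ
      ≤ ∫⁻ z, A ^ (p/q) * ((w z) ^ p * ∫⁻ z', k z z' * G z' ∂μ) ∂μ :=
        lintegral_mono_ae step1
    _ = A ^ (p/q) * ∫⁻ z, (w z) ^ p * ∫⁻ z', k z z' * G z' ∂μ ∂μ :=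
        lintegral_const_mul _ (hwp.mul hJmeas)
    _ = A ^ (p/q) * ∫⁻ z, ∫⁻ z', (w z) ^ p * (k z z' * G z') ∂μ ∂μ := by
        congr 1
        exact lintegral_congr fun z =>
          (lintegral_const_mul _ ((hk.comp measurable_prodMk_left).mul hGmeas)).symm
    _ = A ^ (p/q) * ∫⁻ z', ∫⁻ z, (w z) ^ p * (k z z' * G z') ∂μ ∂μ := by
        congr 1
        exact lintegral_lintegral_swap
          (((hwp.comp measurable_fst).mul hkG).aemeasurable)
    _ = A ^ (p/q) * ∫⁻ z', G z' * ∫⁻ z, k z z' * (w z) ^ p ∂μ ∂μ := by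
        congr 1
        refine lintegral_congr fun z' => ?_
        have hm : Measurable fun z => k z z' * (w z) ^ p := by
          exact (hk.comp (measurable_id.prodMk measurable_const)).mul hwp
        rw [← lintegral_const_mul _ hm]
        exact lintegral_congr fun z => by ring
    _ ≤ A ^ (p/q) * ∫⁻ z', G z' * (B * (w z') ^ p) ∂μ := by
        refine mul_le_mul_right (lintegral_mono_ae ?_) _
        filter_upwards [hB] with z' h using mul_le_mul_right h _
    _ = A ^ (p/q) * ∫⁻ z', B * (F z') ^ p ∂μ := by
        congr 1
        refine lintegral_congr_ae ?_
        filter_upwards [hw0] with z' hw'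
        rw [hGdef]
        have : ((w z')⁻¹) ^ p * (w z') ^ p = 1 := by
          rw [← ENNReal.mul_rpow_of_nonneg _ _ hp0.le,
            ENNReal.inv_mul_cancel hw'.1 hw'.2, ENNReal.one_rpow]
        calc (F z') ^ p * ((w z')⁻¹) ^ p * (B * (w z') ^ p)
            = B * ((F z') ^ p * (((w z')⁻¹) ^ p * (w z') ^ p)) := by ring
          _ = B * (F z') ^ p := by rw [this, mul_one]
    _ = A ^ (p/q) * (B * ∫⁻ z, (F z) ^ p ∂μ) := by
        rw [lintegral_const_mul _ (hF.pow_const _)]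
    _ = A ^ (p/q) * B * ∫⁻ z, (F z) ^ p ∂μ := by rw [mul_assoc]

end Statement4Aux

/-- Let `d ≥ 3`, let `(Ω, ν)` be a finite measure space, and let
`α + β = d`, `α > 0`, `d/min(α,d) < p < ∞`. If `K` is a measurable kernel on
`((0,∞)×Ω)²` with `|K(r,y,r',y')| ≤ r^{-α} (r')^{-β}` for `r > r'` and `K = 0` for `r ≤ r'`,
then `(Tf)(r,y) = ∫∫ K(r,y,r',y') f(r',y') (r')^{d-1} dr' dν(y')` is bounded on
`L^p((0,∞)×Ω, r^{d-1} dr ⊗ ν)`. -/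
theorem statement4 (d : ℕ) (hd : 3 ≤ d)
    {Ω : Type*} [MeasurableSpace Ω] (ν : Measure Ω) [IsFiniteMeasure ν]
    (α β p : ℝ) (hαβ : α + β = d) (hα : 0 < α) (hp : (d : ℝ) / min α d < p)
    (K : ℝ × Ω → ℝ × Ω → ℝ) (hKmeas : Measurable (Function.uncurry K))
    (hKbound : ∀ (r r' : ℝ) (y y' : Ω), 0 < r → 0 < r' → r' < r →
      |K (r, y) (r', y')| ≤ r ^ (-α) * r' ^ (-β))
    (hKzero : ∀ (r r' : ℝ) (y y' : Ω), 0 < r → 0 < r' → r ≤ r' → K (r, y) (r', y') = 0) :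
    ∃ C : ℝ, 0 < C ∧ ∀ f : ℝ × Ω → ℝ,
      MemLp f (ENNReal.ofReal p) ((coneMeasure d).prod ν) →
      eLpNorm (fun z : ℝ × Ω => ∫ z', K z z' * f z' ∂((coneMeasure d).prod ν))
          (ENNReal.ofReal p) ((coneMeasure d).prod ν)
        ≤ ENNReal.ofReal C * eLpNorm f (ENNReal.ofReal p) ((coneMeasure d).prod ν) := by
  classical
  obtain rfl : β = (d : ℝ) - α := by linarith
  open Statement4Aux in
  set μ : Measure (ℝ × Ω) := (coneMeasure d).prod ν with hμdef
  haveI : SFinite μ := by rw [hμdef]; infer_instance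
  -- numerical facts
  have hd0 : (0:ℝ) < d := by
    have : (3:ℝ) ≤ d := by exact_mod_cast hd
    linarith
  have hmin : 0 < min α (d:ℝ) := lt_min hα hd0
  have hp1 : 1 < p := lt_of_le_of_lt ((one_le_div hmin).2 (min_le_right _ _)) hp
  have hp0 : 0 < p := by linarith
  have hdp : (d:ℝ) < α * p := by
    have h1 : (d:ℝ)/α ≤ (d:ℝ)/min α (d:ℝ) :=
      div_le_div_of_nonneg_left hd0.le hmin (min_le_left _ _)
    have h2 : (d:ℝ)/α < p := lt_of_le_of_lt h1 hp
    calc (d:ℝ) = (d/α) * α := by field_simp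
      _ < p * α := mul_lt_mul_of_pos_right h2 hα
      _ = α * p := mul_comm _ _
  set q : ℝ := Real.conjExponent p with hqdef
  have hpq : p.HolderConjugate q := Real.HolderConjugate.conjExponent hp1
  have hq : q = p / (p - 1) := rfl
  have hq0 : 0 < q := hpq.symm.pos
  have hp1' : (0:ℝ) < p - 1 := by linarith
  set s : ℝ := (((d:ℝ) - α) + α * (p - 1)) / (2 * p) with hsdef
  set a : ℝ := (α * p - d) / (2 * (p - 1)) with hadef
  set b : ℝ := (α * p - d) / 2 with hbdef
  have ha : 0 < a := div_pos (by linarith) (by linarith)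
  have hb : 0 < b := div_pos (by linarith) (by linarith)
  have haeq : a = α - s * q := by
    rw [hadef, hsdef, hq]; field_simp; ring
  have hbeq : b = s * p - ((d:ℝ) - α) := by
    rw [hbdef, hsdef]; field_simp; ring
  -- the weight and kernel majorant
  set w : ℝ × Ω → ℝ≥0∞ := fun z => ENNReal.ofReal (z.1 ^ (-s)) with hwdef
  have hw : Measurable w := ((measurable_fst).pow_const _).ennreal_ofReal
  have hw0 : ∀ᵐ z ∂μ, w z ≠ 0 ∧ w z ≠ ∞ := by
    filter_upwards [ae_fst_pos ν d] with z hz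
    refine ⟨?_, ENNReal.ofReal_ne_top⟩
    simp only [hwdef, ne_eq, ENNReal.ofReal_eq_zero, not_le]
    exact Real.rpow_pos_of_pos hz _
  set k : ℝ × Ω → ℝ × Ω → ℝ≥0∞ := fun z z' => (‖K z z'‖₊ : ℝ≥0∞) with hkdef
  have hk : Measurable (Function.uncurry k) := by
    exact hKmeas.nnnorm.coe_nnreal_ennreal
  set A : ℝ≥0∞ := ν univ * ENNReal.ofReal (1/a) with hAdef
  set B : ℝ≥0∞ := ν univ * ENNReal.ofReal (1/b) with hBdef
  -- auxiliary: w z ^ t as ofReal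
  have hwpow : ∀ (t : ℝ) (z : ℝ × Ω), 0 < z.1 → (w z) ^ t = ENNReal.ofReal (z.1 ^ (-(s*t))) := by
    intro t z hz
    rw [hwdef]
    rw [ENNReal.ofReal_rpow_of_pos (Real.rpow_pos_of_pos hz _),
      ← Real.rpow_mul hz.le, neg_mul]
  have hmIoo : Measurable fun x : ℝ => ENNReal.ofReal (x ^ (-((d:ℝ) - α) - s * q)) := by
    exact (measurable_id.pow_const _).ennreal_ofReal
  have hmIoi : Measurable fun x : ℝ => ENNReal.ofReal (x ^ (-α - s * p)) := by
    exact (measurable_id.pow_const _).ennreal_ofReal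
  -- Schur bounds
  have hA : ∀ᵐ z ∂μ, ∫⁻ z', k z z' * (w z') ^ q ∂μ ≤ A * (w z) ^ q := by
    filter_upwards [ae_fst_pos ν d] with z hz
    obtain ⟨r, y⟩ := z
    simp only at hz
    have hstep : ∀ᵐ z' ∂μ, k (r, y) z' * (w z') ^ q
        ≤ ENNReal.ofReal (r ^ (-α))
          * (Ioo (0:ℝ) r).indicator (fun x => ENNReal.ofReal (x ^ (-((d:ℝ) - α) - s * q))) z'.1 := by
      filter_upwards [ae_fst_pos ν d] with z' hz'
      obtain ⟨r', y'⟩ := z'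
      simp only at hz' ⊢
      rw [hwpow q (r', y') hz']
      by_cases hrr : r' < r
      · have hk_le : k (r, y) (r', y') ≤ ENNReal.ofReal (r ^ (-α) * r' ^ (-((d:ℝ) - α))) := by
          rw [hkdef]
          simp only [← enorm_eq_nnnorm, Real.enorm_eq_ofReal_abs]
          exact ENNReal.ofReal_le_ofReal (hKbound r r' y y' hz hz' hrr)
        have hmem : r' ∈ Ioo (0:ℝ) r := ⟨hz', hrr⟩
        rw [indicator_of_mem hmem]
        calc k (r, y) (r', y') * ENNReal.ofReal (r' ^ (-(s * q)))
            ≤ ENNReal.ofReal (r ^ (-α) * r' ^ (-((d:ℝ) - α)))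
                * ENNReal.ofReal (r' ^ (-(s * q))) := mul_le_mul_left hk_le _
          _ = ENNReal.ofReal (r ^ (-α))
                * ENNReal.ofReal (r' ^ (-((d:ℝ) - α) - s * q)) := by
              rw [ENNReal.ofReal_mul (Real.rpow_nonneg hz.le _), mul_assoc,
                ← ENNReal.ofReal_mul (Real.rpow_nonneg hz'.le _),
                ← Real.rpow_add hz', show -((d:ℝ) - α) + -(s*q) = -((d:ℝ) - α) - s * q by ring]
      · have : K (r, y) (r', y') = 0 := hKzero r r' y y' hz hz' (not_lt.1 hrr)
        rw [hkdef]
        simp [this]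
    calc ∫⁻ z', k (r, y) z' * (w z') ^ q ∂μ
        ≤ ∫⁻ z', ENNReal.ofReal (r ^ (-α))
            * (Ioo (0:ℝ) r).indicator
              (fun x => ENNReal.ofReal (x ^ (-((d:ℝ) - α) - s * q))) z'.1 ∂μ :=
          lintegral_mono_ae hstep
      _ = ENNReal.ofReal (r ^ (-α)) * ∫⁻ z',
            (Ioo (0:ℝ) r).indicator
              (fun x => ENNReal.ofReal (x ^ (-((d:ℝ) - α) - s * q))) z'.1 ∂μ := by
          refine lintegral_const_mul _ ?_
          exact ((hmIoo.indicator measurableSet_Ioo).comp measurable_fst)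
      _ = ENNReal.ofReal (r ^ (-α))
            * (ENNReal.ofReal (r ^ a / a) * ν univ) := by
          rw [hμdef, lintegral_prod_fst ν d (hmIoo.indicator measurableSet_Ioo)]
          congr 2
          have := cone_Ioo d (e := -((d:ℝ) - α) - s * q) (R := r)
            (by push_cast; linarith [haeq]) hz
          rw [show -((d:ℝ) - α) - s * q + (d:ℝ) = a by linarith [haeq]] at this
          exact this
      _ = A * ENNReal.ofReal (r ^ (-(s * q))) := by
          rw [← mul_assoc, ← ENNReal.ofReal_mul (Real.rpow_nonneg hz.le _),
            show r ^ (-α) * (r ^ a / a) = r ^ (-(s*q)) * (1/a) by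
              rw [div_eq_mul_inv, ← mul_assoc, ← Real.rpow_add hz,
                show -α + a = -(s*q) by linarith [haeq], one_div],
            ENNReal.ofReal_mul (Real.rpow_nonneg hz.le _), hAdef]
          ring
      _ = A * (w (r, y)) ^ q := by rw [hwpow q (r, y) hz]
  have hB : ∀ᵐ z' ∂μ, ∫⁻ z, k z z' * (w z) ^ p ∂μ ≤ B * (w z') ^ p := by
    filter_upwards [ae_fst_pos ν d] with z' hz'
    obtain ⟨r', y'⟩ := z'
    simp only at hz'
    have hstep : ∀ᵐ z ∂μ, k z (r', y') * (w z) ^ p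
        ≤ ENNReal.ofReal (r' ^ (-((d:ℝ) - α)))
          * (Ioi r').indicator (fun x => ENNReal.ofReal (x ^ (-α - s * p))) z.1 := by
      filter_upwards [ae_fst_pos ν d] with z hz
      obtain ⟨r, y⟩ := z
      simp only at hz ⊢
      rw [hwpow p (r, y) hz]
      by_cases hrr : r' < r
      · have hk_le : k (r, y) (r', y') ≤ ENNReal.ofReal (r ^ (-α) * r' ^ (-((d:ℝ) - α))) := by
          rw [hkdef]
          simp only [← enorm_eq_nnnorm, Real.enorm_eq_ofReal_abs]
          exact ENNReal.ofReal_le_ofReal (hKbound r r' y y' hz hz' hrr)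
        have hmem : r ∈ Ioi r' := hrr
        rw [indicator_of_mem hmem]
        calc k (r, y) (r', y') * ENNReal.ofReal (r ^ (-(s * p)))
            ≤ ENNReal.ofReal (r ^ (-α) * r' ^ (-((d:ℝ) - α)))
                * ENNReal.ofReal (r ^ (-(s * p))) := mul_le_mul_left hk_le _
          _ = ENNReal.ofReal (r' ^ (-((d:ℝ) - α)))
                * ENNReal.ofReal (r ^ (-α - s * p)) := by
              rw [mul_comm (r ^ (-α)) (r' ^ (-((d:ℝ) - α))),
                ENNReal.ofReal_mul (Real.rpow_nonneg hz'.le _), mul_assoc,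
                ← ENNReal.ofReal_mul (Real.rpow_nonneg hz.le _),
                ← Real.rpow_add hz, show -α + -(s*p) = -α - s * p by ring]
      · have : K (r, y) (r', y') = 0 := hKzero r r' y y' hz hz' (not_lt.1 hrr)
        rw [hkdef]
        simp [this]
    calc ∫⁻ z, k z (r', y') * (w z) ^ p ∂μ
        ≤ ∫⁻ z, ENNReal.ofReal (r' ^ (-((d:ℝ) - α)))
            * (Ioi r').indicator (fun x => ENNReal.ofReal (x ^ (-α - s * p))) z.1 ∂μ :=
          lintegral_mono_ae hstep
      _ = ENNReal.ofReal (r' ^ (-((d:ℝ) - α))) * ∫⁻ z,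
            (Ioi r').indicator (fun x => ENNReal.ofReal (x ^ (-α - s * p))) z.1 ∂μ := by
          refine lintegral_const_mul _ ?_
          exact ((hmIoi.indicator measurableSet_Ioi).comp measurable_fst)
      _ = ENNReal.ofReal (r' ^ (-((d:ℝ) - α)))
            * (ENNReal.ofReal (r' ^ (-b) / b) * ν univ) := by
          rw [hμdef, lintegral_prod_fst ν d (hmIoi.indicator measurableSet_Ioi)]
          congr 2
          have := cone_Ioi d (e := -α - s * p) (R := r')
            (by push_cast; linarith [hbeq]) hz'
          rw [show -α - s * p + (d:ℝ) = -b by linarith [hbeq]] at this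
          rw [neg_neg] at this
          exact this
      _ = B * ENNReal.ofReal (r' ^ (-(s * p))) := by
          rw [← mul_assoc, ← ENNReal.ofReal_mul (Real.rpow_nonneg hz'.le _),
            show r' ^ (-((d:ℝ) - α)) * (r' ^ (-b) / b) = r' ^ (-(s*p)) * (1/b) by
              rw [div_eq_mul_inv, ← mul_assoc, ← Real.rpow_add hz',
                show -((d:ℝ) - α) + -b = -(s*p) by linarith [hbeq], one_div],
            ENNReal.ofReal_mul (Real.rpow_nonneg hz'.le _), hBdef]
          ring
      _ = B * (w (r', y')) ^ p := by rw [hwpow p (r', y') hz']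
  -- finiteness of the constant
  have hAne : A ≠ ∞ := ENNReal.mul_ne_top (measure_ne_top ν univ) ENNReal.ofReal_ne_top
  have hBne : B ≠ ∞ := ENNReal.mul_ne_top (measure_ne_top ν univ) ENNReal.ofReal_ne_top
  set D : ℝ≥0∞ := (A ^ (p/q) * B) ^ (1/p) with hDdef
  have hDne : D ≠ ∞ := by
    rw [hDdef]
    exact ENNReal.rpow_ne_top_of_nonneg (by positivity)
      (ENNReal.mul_ne_top (ENNReal.rpow_ne_top_of_nonneg (by positivity) hAne) hBne)
  refine ⟨D.toReal + 1, by positivity, ?_⟩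
  intro f hf
  obtain ⟨g, hgsm, hfg⟩ := hf.1
  have hgmeas : Measurable g := hgsm.measurable
  have hTfg : (fun z : ℝ × Ω => ∫ z', K z z' * f z' ∂μ)
      = fun z : ℝ × Ω => ∫ z', K z z' * g z' ∂μ := by
    funext z
    exact integral_congr_ae (hfg.mono fun z' h => by
      show K z z' * f z' = K z z' * g z'; rw [h])
  rw [hμdef] at hTfg ⊢
  rw [hTfg, eLpNorm_congr_ae hfg]
  set F : ℝ × Ω → ℝ≥0∞ := fun z => (‖g z‖₊ : ℝ≥0∞) with hFdef
  have hFmeas : Measurable F := hgmeas.nnnorm.coe_nnreal_ennreal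
  have hptop : (ENNReal.ofReal p) ≠ ∞ := ENNReal.ofReal_ne_top
  have hpzero : (ENNReal.ofReal p) ≠ 0 := by
    simp only [ne_eq, ENNReal.ofReal_eq_zero, not_le]; linarith
  rw [eLpNorm_eq_lintegral_rpow_enorm_toReal hpzero hptop,
    eLpNorm_eq_lintegral_rpow_enorm_toReal hpzero hptop, ENNReal.toReal_ofReal hp0.le]
  have hTle : ∀ z : ℝ × Ω, (‖∫ z', K z z' * g z' ∂μ‖₊ : ℝ≥0∞)
      ≤ ∫⁻ z', k z z' * F z' ∂μ := by
    intro z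
    refine le_trans (enorm_integral_le_lintegral_enorm _) (le_of_eq ?_)
    refine lintegral_congr fun z' => ?_
    rw [hkdef, hFdef, enorm_eq_nnnorm, nnnorm_mul, ENNReal.coe_mul]
  have hschur := schur_test μ hk hw hw0 hpq A B hA hB hFmeas
  calc (∫⁻ z, (‖∫ z', K z z' * g z' ∂μ‖₊ : ℝ≥0∞) ^ p ∂μ) ^ (1/p)
      ≤ (∫⁻ z, (∫⁻ z', k z z' * F z' ∂μ) ^ p ∂μ) ^ (1/p) := by
        refine ENNReal.rpow_le_rpow (lintegral_mono fun z => ?_) (by positivity)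
        exact ENNReal.rpow_le_rpow (hTle z) hp0.le
    _ ≤ (A ^ (p/q) * B * ∫⁻ z, (F z) ^ p ∂μ) ^ (1/p) :=
        ENNReal.rpow_le_rpow hschur (by positivity)
    _ = D * (∫⁻ z, (F z) ^ p ∂μ) ^ (1/p) := by
        rw [ENNReal.mul_rpow_of_nonneg _ _ (by positivity), hDdef]
    _ ≤ ENNReal.ofReal (D.toReal + 1) * (∫⁻ z, (F z) ^ p ∂μ) ^ (1/p) := by
        refine mul_le_mul_left ?_ _
        calc D = ENNReal.ofReal D.toReal := (ENNReal.ofReal_toReal hDne).symm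
          _ ≤ _ := ENNReal.ofReal_le_ofReal (by linarith [ENNReal.toReal_nonneg (a := D)])
end

section
/- There exists a constant C > 0 such that for every real μ ≥ 1/2 and every real r ≥ 1, one has I_μ(r) ≤ C · 2^{-μ} r^{μ - 1} e^{r} / Γ(μ + 1/2). -/
open Real

/-- The modified Bessel function of the first kind, via the Poisson integral representation
`I_μ(r) = (2^{-μ} r^{μ} / (π^{1/2} Γ(μ + 1/2))) · ∫_{-1}^{1} (1 - t²)^{μ - 1/2} e^{-rt} dt`. -/
noncomputable def besselI (μ r : ℝ) : ℝ :=
  (2 ^ (-μ) * r ^ μ / (Real.sqrt π * Real.Gamma (μ + 1 / 2))) *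
    ∫ t in (-1 : ℝ)..1, (1 - t ^ 2) ^ (μ - 1 / 2) * Real.exp (-r * t)

/-- There is `C > 0` such that for all `μ ≥ 1/2` and `r ≥ 1`,
`I_μ(r) ≤ C · 2^{-μ} r^{μ-1} e^{r} / Γ(μ + 1/2)`. -/
theorem statement6 :
    ∃ C : ℝ, 0 < C ∧ ∀ μ r : ℝ, 1 / 2 ≤ μ → 1 ≤ r →
      besselI μ r ≤ C * (2 ^ (-μ) * r ^ (μ - 1) * Real.exp r / Real.Gamma (μ + 1 / 2)) := by
  refine ⟨1, one_pos, fun μ r hμ hr => ?_⟩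
  have hr0 : (0:ℝ) < r := lt_of_lt_of_le one_pos hr
  have he : (0:ℝ) ≤ μ - 1 / 2 := by linarith
  have hΓ : 0 < Real.Gamma (μ + 1 / 2) := Real.Gamma_pos_of_pos (by linarith)
  -- the integrand is continuous
  have hcont : Continuous fun t : ℝ => (1 - t ^ 2) ^ (μ - 1 / 2) * Real.exp (-r * t) := by
    exact ((Real.continuous_rpow_const he).comp (by continuity)).mul (by continuity)
  -- pointwise bound by `exp (-r t)`
  have hI : (∫ t in (-1 : ℝ)..1, (1 - t ^ 2) ^ (μ - 1 / 2) * Real.exp (-r * t)) ≤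
      ∫ t in (-1 : ℝ)..1, Real.exp (-r * t) := by
    apply intervalIntegral.integral_mono_on (by norm_num)
      (hcont.intervalIntegrable _ _)
      ((Continuous.intervalIntegrable (by continuity) _ _))
    intro t ht
    have ht1 : (0:ℝ) ≤ 1 - t ^ 2 := by nlinarith [ht.1, ht.2]
    have h1 : (1 - t ^ 2) ^ (μ - 1 / 2) ≤ 1 :=
      Real.rpow_le_one ht1 (by nlinarith [ht.1, ht.2]) he
    have h2 : (0:ℝ) < Real.exp (-r * t) := Real.exp_pos _
    nlinarith [Real.rpow_nonneg ht1 (μ - 1 / 2)]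
  -- compute the exponential integral
  have hexp : (∫ t in (-1 : ℝ)..1, Real.exp (-r * t)) = (Real.exp r - Real.exp (-r)) / r := by
    have := intervalIntegral.integral_comp_mul_left (a := (-1:ℝ)) (b := 1)
      (fun x => Real.exp x) (neg_ne_zero.mpr hr0.ne')
    simp only [integral_exp, smul_eq_mul] at this
    have hrne : r ≠ 0 := hr0.ne'
    rw [this]
    field_simp
    linear_combination
  have hexp' : (∫ t in (-1 : ℝ)..1, Real.exp (-r * t)) ≤ Real.exp r / r := by
    rw [hexp]
    gcongr
    linarith [Real.exp_pos (-r)]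
  have hcoef : (0:ℝ) ≤ 2 ^ (-μ) * r ^ μ / (Real.sqrt π * Real.Gamma (μ + 1 / 2)) := by
    have : (0:ℝ) < Real.sqrt π := Real.sqrt_pos.2 Real.pi_pos
    positivity
  have hsq : (1:ℝ) ≤ Real.sqrt π := Real.one_le_sqrt.2 (by linarith [Real.pi_gt_three])
  calc besselI μ r ≤ (2 ^ (-μ) * r ^ μ / (Real.sqrt π * Real.Gamma (μ + 1 / 2))) *
        (Real.exp r / r) := mul_le_mul_of_nonneg_left (hI.trans hexp') hcoef
    _ = 2 ^ (-μ) * r ^ (μ - 1) * Real.exp r / (Real.sqrt π * Real.Gamma (μ + 1 / 2)) := by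
        rw [Real.rpow_sub hr0, Real.rpow_one]; ring
    _ ≤ 1 * (2 ^ (-μ) * r ^ (μ - 1) * Real.exp r / Real.Gamma (μ + 1 / 2)) := by
        rw [one_mul]
        refine div_le_div_of_nonneg_left (by positivity) hΓ ?_
        nlinarith
end

section
/- There exists a constant C > 0 such that for every real μ ≥ 1/2 and every real r > 0, one has e^{-r/2} r^{μ - 1/2} ≤ C · 2^{μ} Γ(μ). -/
open Real MeasureTheory Set

lemma lemA {s r : ℝ} (hs : 0 ≤ s) (hr : 0 < r) :
    exp (-r / 2) * r ^ s ≤ exp (s * (log (2 * s) - 1)) := by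
  rcases eq_or_lt_of_le hs with h | h
  · rw [← h]
    simp only [Real.rpow_zero, mul_one, zero_mul, Real.exp_zero]
    exact Real.exp_le_one_iff.2 (by linarith)
  · rw [Real.rpow_def_of_pos hr, ← Real.exp_add, Real.exp_le_exp]
    have key := Real.log_le_sub_one_of_pos (show (0:ℝ) < r / (2*s) by positivity)
    rw [Real.log_div hr.ne' (by positivity : (2*s) ≠ 0)] at key
    have h2 : s * (log r - log (2*s)) ≤ s * (r/(2*s) - 1) :=
      mul_le_mul_of_nonneg_left key h.le
    have h3 : s * (r/(2*s)) = r/2 := by field_simp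
    nlinarith [h2, h3]

lemma lemB {μ : ℝ} (hμ : 1/2 ≤ μ) : exp (-3) ≤ Real.Gamma μ := by
  have hμ0 : (0:ℝ) < μ := by linarith
  rw [Real.Gamma_eq_integral hμ0]
  have hint : IntegrableOn (fun x : ℝ => exp (-x) * x ^ (μ - 1)) (Ioi 0) :=
    Real.GammaIntegral_convergent hμ0
  have hnn : 0 ≤ᵐ[volume.restrict (Ioi (0:ℝ))] fun x : ℝ => exp (-x) * x ^ (μ - 1) := by
    filter_upwards [ae_restrict_mem measurableSet_Ioi] with x hx
    have : (0:ℝ) < x := hx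
    positivity
  have step1 : ∫ x in Ioc (1:ℝ) 2, exp (-x) * x ^ (μ - 1) ≤
      ∫ x in Ioi (0:ℝ), exp (-x) * x ^ (μ - 1) :=
    setIntegral_mono_set hint hnn
      (HasSubset.Subset.eventuallyLE (by intro x hx; exact lt_trans one_pos hx.1))
  have step2 : exp (-3) * (volume (Ioc (1:ℝ) 2)).toReal ≤
      ∫ x in Ioc (1:ℝ) 2, exp (-x) * x ^ (μ - 1) := by
    rw [mul_comm, ← smul_eq_mul, ← measureReal_def]
    apply setIntegral_ge_of_const_le measurableSet_Ioc
    · rw [Real.volume_Ioc]; exact ENNReal.ofReal_ne_top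
    · intro x hx
      have hx1 : (1:ℝ) ≤ x := hx.1.le
      have hx2 : x ≤ 2 := hx.2
      have hx0 : (0:ℝ) < x := by linarith
      have e1 : exp (-2) ≤ exp (-x) := exp_le_exp.2 (by linarith)
      have e2 : exp (-1) ≤ x ^ (μ - 1) := by
        have a1 : x ^ (-1:ℝ) ≤ x ^ (μ - 1) :=
          Real.rpow_le_rpow_of_exponent_le hx1 (by linarith)
        have a2 : x ^ (-1:ℝ) = x⁻¹ := Real.rpow_neg_one x
        have a3 : (2:ℝ)⁻¹ ≤ x⁻¹ := by
          apply inv_anti₀ hx0 hx2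
        have a4 : exp (-1) ≤ (2:ℝ)⁻¹ := by
          rw [Real.exp_neg]
          have : (2:ℝ) ≤ exp 1 := by
            have := Real.add_one_le_exp (1:ℝ); linarith
          exact inv_anti₀ (by norm_num) this
        linarith [a1, a2 ▸ a1]
      calc exp (-3) = exp (-2) * exp (-1) := by rw [← Real.exp_add]; norm_num
        _ ≤ exp (-x) * x ^ (μ - 1) :=
          mul_le_mul e1 e2 (exp_pos _).le (exp_pos _).le
    · exact hint.mono_set (by intro x hx; exact lt_trans one_pos hx.1)
  have hv : (volume (Ioc (1:ℝ) 2)).toReal = 1 := by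
    rw [Real.volume_Ioc]; norm_num
  rw [hv, mul_one] at step2
  linarith
lemma lemC {s : ℝ} (hs : 4 ≤ s) : exp (s * log s - s - 2) ≤ Real.Gamma (s + 1/2) := by
  have hs0 : (0:ℝ) < s := by linarith
  have hsq2 : (2:ℝ) ≤ Real.sqrt s := by
    rw [show (2:ℝ) = Real.sqrt 4 by rw [show (4:ℝ) = 2^2 by norm_num, Real.sqrt_sq (by norm_num)]]
    exact Real.sqrt_le_sqrt hs
  have hss : Real.sqrt s * Real.sqrt s = s := Real.mul_self_sqrt hs0.le
  have hsqpos : (0:ℝ) < Real.sqrt s := by linarith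
  have hhalf : Real.sqrt s ≤ s / 2 := by nlinarith
  set a := s - Real.sqrt s with ha
  have ha2 : (2:ℝ) ≤ a := by nlinarith
  have ha0 : (0:ℝ) < a := by linarith
  have hμ0 : (0:ℝ) < s + 1/2 := by linarith
  rw [Real.Gamma_eq_integral hμ0]
  have hexp : s + 1/2 - 1 = s - 1/2 := by ring
  rw [hexp]
  have hint : IntegrableOn (fun x : ℝ => exp (-x) * x ^ (s - 1/2)) (Ioi 0) := by
    have := Real.GammaIntegral_convergent hμ0
    rwa [hexp] at this
  have hnn : 0 ≤ᵐ[volume.restrict (Ioi (0:ℝ))] fun x : ℝ => exp (-x) * x ^ (s - 1/2) := by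
    filter_upwards [ae_restrict_mem measurableSet_Ioi] with x hx
    have : (0:ℝ) < x := hx
    positivity
  have hsub : Ioc a s ⊆ Ioi (0:ℝ) := fun x hx => lt_trans ha0 hx.1
  have step1 : ∫ x in Ioc a s, exp (-x) * x ^ (s - 1/2) ≤
      ∫ x in Ioi (0:ℝ), exp (-x) * x ^ (s - 1/2) :=
    setIntegral_mono_set hint hnn (HasSubset.Subset.eventuallyLE hsub)
  have key : ∀ x ∈ Ioc a s, exp (s * log s - s - 2) / Real.sqrt s ≤ exp (-x) * x ^ (s - 1/2) := by
    intro x hx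
    have hxa : a < x := hx.1
    have hxs : x ≤ s := hx.2
    have hx0 : (0:ℝ) < x := lt_trans ha0 hxa
    -- x ^ (s - 1/2) = exp (log x * s) * (sqrt x)⁻¹ ≥ exp (s * log x) / sqrt s
    have e1 : x ^ (s - 1/2) = exp (s * log x) * (Real.sqrt x)⁻¹ := by
      rw [Real.rpow_def_of_pos hx0, show log x * (s - 1/2) = s * log x + (-(1/2)) * log x by ring,
        Real.exp_add]
      congr 1
      rw [show (-(1/2:ℝ)) * log x = -((1/2) * log x) by ring, Real.exp_neg]
      congr 1
      rw [show (1/2:ℝ) * log x = log x / 2 by ring, ← Real.log_sqrt hx0.le,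
        Real.exp_log (Real.sqrt_pos.2 hx0)]
    have e2 : (Real.sqrt s)⁻¹ ≤ (Real.sqrt x)⁻¹ := by
      apply inv_anti₀ (Real.sqrt_pos.2 hx0) (Real.sqrt_le_sqrt hxs)
    -- main log inequality: s * log s - s - 2 ≤ s * log x - x
    have hlog : log s - log x ≤ s / x - 1 := by
      rw [← Real.log_div hs0.ne' hx0.ne']
      exact Real.log_le_sub_one_of_pos (by positivity)
    have hlog0 : 0 ≤ log s - log x := by
      have := Real.log_le_log hx0 hxs
      linarith
    have hxL : x * (log s - log x) ≤ s - x := by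
      have := mul_le_mul_of_nonneg_left hlog hx0.le
      have hdiv : x * (s / x) = s := by field_simp
      nlinarith
    have hdel : s - x ≤ Real.sqrt s := by
      simp only [ha] at hxa; linarith
    have hx2 : s / 2 ≤ x := by
      have : a ≥ s/2 := by linarith
      linarith
    have main : s * log s - s - 2 ≤ s * log x - x := by
      nlinarith [mul_le_mul_of_nonneg_left hxL (by norm_num : (0:ℝ) ≤ 2),
        mul_nonneg (by linarith : (0:ℝ) ≤ s - x) hlog0, hss,
        mul_le_mul hdel hlog (by linarith) hsqpos.le]
    calc exp (s * log s - s - 2) / Real.sqrt s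
        ≤ exp (s * log x - x) / Real.sqrt s := by
          gcongr
      _ = exp (-x) * (exp (s * log x) * (Real.sqrt s)⁻¹) := by
          rw [div_eq_mul_inv, show s * log x - x = -x + s * log x by ring, Real.exp_add]; ring
      _ ≤ exp (-x) * (exp (s * log x) * (Real.sqrt x)⁻¹) := by
          apply mul_le_mul_of_nonneg_left _ (exp_pos _).le
          exact mul_le_mul_of_nonneg_left e2 (exp_pos _).le
      _ = exp (-x) * x ^ (s - 1/2) := by rw [e1]
  have step2 : (exp (s * log s - s - 2) / Real.sqrt s) * (volume (Ioc a s)).toReal ≤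
      ∫ x in Ioc a s, exp (-x) * x ^ (s - 1/2) := by
    rw [mul_comm, ← smul_eq_mul, ← measureReal_def]
    apply setIntegral_ge_of_const_le measurableSet_Ioc
    · rw [Real.volume_Ioc]; exact ENNReal.ofReal_ne_top
    · exact key
    · exact hint.mono_set hsub
  have hv : (volume (Ioc a s)).toReal = Real.sqrt s := by
    rw [Real.volume_Ioc, ha, ENNReal.toReal_ofReal (by linarith)]
    ring
  rw [hv, div_mul_cancel₀ _ hsqpos.ne'] at step2
  linarith

/-- There is `C > 0` such that for all `μ ≥ 1/2` and `r > 0`,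
`e^{-r/2} r^{μ - 1/2} ≤ C · 2^{μ} Γ(μ)`. -/
theorem statement9 :
    ∃ C : ℝ, 0 < C ∧ ∀ μ r : ℝ, 1 / 2 ≤ μ → 0 < r →
      Real.exp (-r / 2) * r ^ (μ - 1 / 2) ≤ C * 2 ^ μ * Real.Gamma μ := by
  refine ⟨exp 30, exp_pos 30, ?_⟩
  intro μ r hμ hr
  set s := μ - 1/2 with hsdef
  have hs0 : 0 ≤ s := by simp only [hsdef]; linarith
  have h1 : exp (-r / 2) * r ^ (μ - 1/2) ≤ exp (s * (log (2*s) - 1)) := lemA hs0 hr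
  have h2μ : (1:ℝ) ≤ 2 ^ μ := Real.one_le_rpow (by norm_num) (by linarith)
  have hΓ3 : exp (-3) ≤ Real.Gamma μ := lemB hμ
  have hΓpos : 0 < Real.Gamma μ := lt_of_lt_of_le (exp_pos _) hΓ3
  rw [mul_assoc]
  by_cases hcase : s ≤ 4
  · have hb : s * (log (2*s) - 1) ≤ 24 := by
      rcases eq_or_lt_of_le hs0 with h | h
      · rw [← h]; norm_num
      · have hl : log (2*s) ≤ 2*s - 1 := by
          have := Real.log_le_sub_one_of_pos (show (0:ℝ) < 2*s by linarith)
          linarith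
        nlinarith
    have hA : exp (-3) ≤ 2 ^ μ * Real.Gamma μ := by
      calc exp (-3) = 1 * exp (-3) := (one_mul _).symm
        _ ≤ 2 ^ μ * Real.Gamma μ := mul_le_mul h2μ hΓ3 (exp_pos _).le (by positivity)
    calc exp (-r / 2) * r ^ (μ - 1/2) ≤ exp (s * (log (2*s) - 1)) := h1
      _ ≤ exp 24 := exp_le_exp.2 hb
      _ = exp 30 * exp (-3) * exp (-3) := by rw [← Real.exp_add, ← Real.exp_add]; norm_num
      _ ≤ exp 30 * exp (-3) * (2 ^ μ * Real.Gamma μ) := by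
          apply mul_le_mul_of_nonneg_left hA (by positivity)
      _ ≤ exp 30 * (2 ^ μ * Real.Gamma μ) := by
          have hX : 0 < 2 ^ μ * Real.Gamma μ :=
            mul_pos (Real.rpow_pos_of_pos two_pos μ) hΓpos
          have h3 : exp (-3) ≤ 1 := exp_le_one_iff.2 (by norm_num)
          nlinarith [mul_pos (exp_pos 30) hX]
  · push_neg at hcase
    have hs4 : (4:ℝ) ≤ s := hcase.le
    have hspos : (0:ℝ) < s := by linarith
    have hΓ : exp (s * log s - s - 2) ≤ Real.Gamma μ := by
      have := lemC hs4
      have hms : s + 1/2 = μ := by simp only [hsdef]; ring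
      rwa [hms] at this
    have h2 : exp (log 2 * s) ≤ 2 ^ μ := by
      rw [Real.rpow_def_of_pos two_pos]
      apply exp_le_exp.2
      have hl2 : (0:ℝ) ≤ log 2 := Real.log_nonneg (by norm_num)
      have : s ≤ μ := by simp only [hsdef]; linarith
      nlinarith
    have e1 : exp (s * (log (2*s) - 1)) =
        exp 2 * (exp (log 2 * s) * exp (s * log s - s - 2)) := by
      rw [← Real.exp_add, ← Real.exp_add, Real.log_mul two_ne_zero hspos.ne']
      congr 1; ring
    calc exp (-r / 2) * r ^ (μ - 1/2) ≤ exp (s * (log (2*s) - 1)) := h1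
      _ = exp 2 * (exp (log 2 * s) * exp (s * log s - s - 2)) := e1
      _ ≤ exp 30 * (2 ^ μ * Real.Gamma μ) := by
          apply mul_le_mul (exp_le_exp.2 (by norm_num))
            (mul_le_mul h2 hΓ (exp_pos _).le (by positivity))
            (by positivity) (exp_pos _).le
end

section
/- There exists a constant C > 0 such that for every real μ ≥ 1/2 and all reals r, r' > 0 with r' ≥ 4r, one has I_μ(r) · K_μ(r') ≤ C · (2r/r')^{μ} · e^{-r'/4}. -/
open Real MeasureTheory Set

/-- The modified Bessel function of the second kind, via the integral representation
`K_μ(r) = (π^{1/2} 2^{-μ} r^{μ} / Γ(μ + 1/2)) · ∫_{1}^{∞} e^{-rt} (t² - 1)^{μ - 1/2} dt`. -/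
noncomputable def besselK (μ r : ℝ) : ℝ :=
  (Real.sqrt π * 2 ^ (-μ) * r ^ μ / Real.Gamma (μ + 1 / 2)) *
    ∫ t in Set.Ioi (1 : ℝ), Real.exp (-r * t) * (t ^ 2 - 1) ^ (μ - 1 / 2)

lemma preim : (fun x : ℝ => x + 1) ⁻¹' (Ioi 1) = Ioi 0 := by ext x; simp

lemma shiftMP : MeasurePreserving (fun x : ℝ => x + 1) volume volume :=
  measurePreserving_add_right volume 1

lemma shiftEmb : MeasurableEmbedding (fun x : ℝ => x + 1) := by
  have := (MeasurableEquiv.addRight (1:ℝ)).measurableEmbedding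
  simpa [MeasurableEquiv.coe_addRight] using this

lemma integral_Ioi_one_shift (f : ℝ → ℝ) :
    ∫ s in Ioi (0:ℝ), f (s + 1) = ∫ t in Ioi (1:ℝ), f t := by
  have h := shiftMP.setIntegral_preimage_emb shiftEmb f (Ioi 1)
  rwa [preim] at h

lemma integrableOn_Ioi_one_shift {f : ℝ → ℝ}
    (h : IntegrableOn (fun s => f (s+1)) (Ioi 0)) : IntegrableOn f (Ioi 1) := by
  have h2 := (shiftMP.restrict_preimage_emb shiftEmb (Ioi 1)).integrable_comp_emb shiftEmb (g := f)
  rw [preim] at h2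
  exact h2.mp h

lemma integrableOn_laplace0 {q b : ℝ} (hq : 0 ≤ q) (hb : 0 < b) :
    IntegrableOn (fun s : ℝ => s ^ q * Real.exp (-(b*s))) (Ioi 0) := by
  have h := integrableOn_rpow_mul_exp_neg_mul_rpow (show (-1:ℝ) < q by linarith) zero_lt_one hb
  simpa [neg_mul] using h

lemma integral_laplace0 {q b : ℝ} (hq : 0 ≤ q) (hb : 0 < b) :
    ∫ s in Ioi (0:ℝ), s ^ q * Real.exp (-(b*s)) = (1/b)^(q+1) * Real.Gamma (q+1) := by
  have h := Real.integral_rpow_mul_exp_neg_mul_Ioi (show (0:ℝ) < q + 1 by linarith) hb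
  simpa using h

lemma shifted_eq {q b : ℝ} :
    (fun s : ℝ => (fun t : ℝ => Real.exp (-(b*t)) * (t-1)^q) (s+1))
      = fun s : ℝ => Real.exp (-b) * (s ^ q * Real.exp (-(b*s))) := by
  funext s
  simp only [add_sub_cancel_right]
  rw [show b*(s+1) = b*s + b by ring, neg_add, Real.exp_add]
  ring

lemma integrableOn_laplace1 {q b : ℝ} (hq : 0 ≤ q) (hb : 0 < b) :
    IntegrableOn (fun t : ℝ => Real.exp (-(b*t)) * (t-1)^q) (Ioi 1) := by
  apply integrableOn_Ioi_one_shift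
  rw [shifted_eq]
  exact ((integrableOn_laplace0 hq hb).const_mul _)

lemma integral_laplace1 {q b : ℝ} (hq : 0 ≤ q) (hb : 0 < b) :
    ∫ t in Ioi (1:ℝ), Real.exp (-(b*t)) * (t-1)^q
      = Real.exp (-b) * ((1/b)^(q+1) * Real.Gamma (q+1)) := by
  rw [← integral_Ioi_one_shift]
  rw [show (fun s : ℝ => (fun t : ℝ => Real.exp (-(b*t)) * (t-1)^q) (s+1)) = _ from shifted_eq]
  rw [integral_const_mul, integral_laplace0 hq hb]

lemma gamma_lb {a : ℝ} (ha : 0 ≤ a) : a ^ a ≤ Real.exp (a+1) * Real.Gamma (a+1) := by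
  have h1 : Real.Gamma (a+1) = ∫ x in Ioi (0:ℝ), Real.exp (-x) * x ^ a := by
    rw [Real.Gamma_eq_integral (by linarith : (0:ℝ) < a + 1)]
    simp [add_sub_cancel_right]
  have hInt : IntegrableOn (fun x : ℝ => Real.exp (-x) * x ^ a) (Ioi 0) := by
    have := Real.GammaIntegral_convergent (show (0:ℝ) < a + 1 by linarith)
    simpa [add_sub_cancel_right] using this
  have hsub : Ioc a (a+1) ⊆ Ioi (0:ℝ) := fun x hx => lt_of_le_of_lt ha hx.1
  have hmono : ∫ x in Ioc a (a+1), Real.exp (-x) * x ^ a ≤ ∫ x in Ioi (0:ℝ), Real.exp (-x) * x ^ a := by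
    apply setIntegral_mono_set hInt
    · filter_upwards [ae_restrict_mem measurableSet_Ioi] with x hx
      exact mul_nonneg (Real.exp_pos _).le (Real.rpow_nonneg (le_of_lt hx) _)
    · exact Filter.Eventually.of_forall hsub
  have hconst : a ^ a * Real.exp (-(a+1)) ≤ ∫ x in Ioc a (a+1), Real.exp (-x) * x ^ a := by
    have hc : ∫ _x in Ioc a (a+1), (a ^ a * Real.exp (-(a+1))) = a ^ a * Real.exp (-(a+1)) := by
      rw [setIntegral_const]
      simp [Real.volume_Ioc]
    rw [← hc]
    apply setIntegral_mono_on
    · exact (integrableOn_const_iff).mpr (Or.inr measure_Ioc_lt_top)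
    · exact hInt.mono_set hsub
    · exact measurableSet_Ioc
    · intro x hx
      have h1 : a ^ a ≤ x ^ a := Real.rpow_le_rpow ha hx.1.le ha
      have h2 : Real.exp (-(a+1)) ≤ Real.exp (-x) := Real.exp_le_exp.mpr (by linarith [hx.2])
      calc a ^ a * Real.exp (-(a+1)) ≤ x ^ a * Real.exp (-x) :=
            mul_le_mul h1 h2 (Real.exp_pos _).le (Real.rpow_nonneg (by linarith [hx.1]) _)
        _ = Real.exp (-x) * x ^ a := by ring
  have key : a ^ a * Real.exp (-(a+1)) ≤ Real.Gamma (a+1) := by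
    rw [h1]; exact le_trans hconst hmono
  have := mul_le_mul_of_nonneg_left key (Real.exp_pos (a+1)).le
  calc a ^ a = Real.exp (a+1) * (a ^ a * Real.exp (-(a+1))) := by
        rw [Real.exp_neg]; field_simp
    _ ≤ Real.exp (a+1) * Real.Gamma (a+1) := this

lemma gamma_ge_inv_e {x : ℝ} (hx : 1 ≤ x) : Real.exp (-1) ≤ Real.Gamma x := by
  have hx0 : (0:ℝ) < x := by linarith
  rw [Real.Gamma_eq_integral hx0]
  have hInt : IntegrableOn (fun t : ℝ => Real.exp (-t) * t ^ (x-1)) (Ioi 0) :=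
    Real.GammaIntegral_convergent hx0
  have h1 : Real.exp (-1) = ∫ t in Ioi (1:ℝ), Real.exp (-t) := (integral_exp_neg_Ioi 1).symm
  rw [h1]
  have step1 : ∫ t in Ioi (1:ℝ), Real.exp (-t) ≤ ∫ t in Ioi (1:ℝ), Real.exp (-t) * t ^ (x-1) := by
    apply integral_mono_of_nonneg
    · exact Filter.Eventually.of_forall fun t => (Real.exp_pos _).le
    · exact hInt.mono_set (Ioi_subset_Ioi zero_le_one)
    · filter_upwards [ae_restrict_mem measurableSet_Ioi] with t ht
      have h2 : (1:ℝ) ≤ t ^ (x-1) := by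
        have := Real.rpow_le_rpow zero_le_one (le_of_lt ht) (by linarith : (0:ℝ) ≤ x - 1)
        simpa using this
      nlinarith [(Real.exp_pos (-t)).le]
  refine step1.trans ?_
  apply setIntegral_mono_set hInt
  · filter_upwards [ae_restrict_mem measurableSet_Ioi] with t ht
    exact mul_nonneg (Real.exp_pos _).le (Real.rpow_nonneg (le_of_lt ht) _)
  · exact Filter.Eventually.of_forall (Ioi_subset_Ioi zero_le_one)

lemma gamma_ratio {μ : ℝ} (hμ : 1/2 ≤ μ) : Real.Gamma μ ≤ (1 + 2*Real.exp 1) * Real.Gamma (μ+1/2) := by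
  have hμ0 : (0:ℝ) < μ := by linarith
  have hIoc : IntegrableOn (fun t : ℝ => Real.exp (-t) * t ^ (μ-1)) (Ioc 0 1) :=
    (Real.GammaIntegral_convergent hμ0).mono_set Ioc_subset_Ioi_self
  have hIoi1 : IntegrableOn (fun t : ℝ => Real.exp (-t) * t ^ (μ-1)) (Ioi 1) :=
    (Real.GammaIntegral_convergent hμ0).mono_set (Ioi_subset_Ioi zero_le_one)
  have hsplit : Real.Gamma μ = (∫ t in Ioc (0:ℝ) 1, Real.exp (-t) * t ^ (μ-1))
      + ∫ t in Ioi (1:ℝ), Real.exp (-t) * t ^ (μ-1) := by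
    rw [Real.Gamma_eq_integral hμ0, ← setIntegral_union (Ioc_disjoint_Ioi le_rfl)
      measurableSet_Ioi hIoc hIoi1, Ioc_union_Ioi_eq_Ioi zero_le_one]
  -- piece 1 ≤ 2
  have hrpowInt : IntegrableOn (fun t : ℝ => t ^ (μ-1)) (Ioc 0 1) :=
    (intervalIntegral.intervalIntegrable_rpow' (by linarith : (-1:ℝ) < μ - 1)).1
  have hp1 : (∫ t in Ioc (0:ℝ) 1, Real.exp (-t) * t ^ (μ-1)) ≤ ∫ t in Ioc (0:ℝ) 1, t ^ (μ-1) := by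
    apply setIntegral_mono_on hIoc hrpowInt measurableSet_Ioc
    intro t ht
    have h1 : Real.exp (-t) ≤ 1 := Real.exp_le_one_iff.mpr (by linarith [ht.1])
    nlinarith [Real.rpow_nonneg ht.1.le (μ-1)]
  have hval : (∫ t in Ioc (0:ℝ) 1, t ^ (μ-1)) = 1/μ := by
    rw [← intervalIntegral.integral_of_le zero_le_one,
      integral_rpow (Or.inl (by linarith : (-1:ℝ) < μ - 1))]
    rw [Real.zero_rpow (by linarith : μ - 1 + 1 ≠ 0), Real.one_rpow]
    norm_num
  -- piece 2 ≤ Gamma (μ+1/2)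
  have hp2 : (∫ t in Ioi (1:ℝ), Real.exp (-t) * t ^ (μ-1)) ≤ Real.Gamma (μ+1/2) := by
    have hInt2 : IntegrableOn (fun t : ℝ => Real.exp (-t) * t ^ (μ+1/2-1)) (Ioi 0) :=
      Real.GammaIntegral_convergent (by linarith : (0:ℝ) < μ + 1/2)
    have step1 : (∫ t in Ioi (1:ℝ), Real.exp (-t) * t ^ (μ-1))
        ≤ ∫ t in Ioi (1:ℝ), Real.exp (-t) * t ^ (μ+1/2-1) := by
      apply integral_mono_of_nonneg
      · filter_upwards [ae_restrict_mem measurableSet_Ioi] with t ht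
        exact mul_nonneg (Real.exp_pos _).le (Real.rpow_nonneg (by linarith [mem_Ioi.mp ht]) _)
      · exact hInt2.mono_set (Ioi_subset_Ioi zero_le_one)
      · filter_upwards [ae_restrict_mem measurableSet_Ioi] with t ht
        have := Real.rpow_le_rpow_of_exponent_le (le_of_lt (mem_Ioi.mp ht))
          (by linarith : μ - 1 ≤ μ + 1/2 - 1)
        nlinarith [(Real.exp_pos (-t)).le]
    refine step1.trans ?_
    rw [Real.Gamma_eq_integral (by linarith : (0:ℝ) < μ + 1/2)]
    apply setIntegral_mono_set hInt2
    · filter_upwards [ae_restrict_mem measurableSet_Ioi] with t ht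
      exact mul_nonneg (Real.exp_pos _).le (Real.rpow_nonneg (le_of_lt ht) _)
    · exact Filter.Eventually.of_forall (Ioi_subset_Ioi zero_le_one)
  have hge : Real.exp (-1) ≤ Real.Gamma (μ+1/2) := gamma_ge_inv_e (by linarith)
  have hee : Real.exp 1 * Real.exp (-1) = 1 := by rw [← Real.exp_add]; norm_num
  have h1μ : 1/μ ≤ 2 := by rw [div_le_iff₀ hμ0]; linarith
  have hepos := Real.exp_pos 1
  nlinarith [hsplit, hp1, hval, hp2]

lemma max_bound {a x : ℝ} (ha : 0 ≤ a) (hx : 0 < x) :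
    x ^ a * Real.exp (-(x/2)) ≤ (2*a) ^ a * Real.exp (-a) := by
  rcases ha.eq_or_lt with h | h
  · rw [← h]
    simp only [Real.rpow_zero, mul_zero, one_mul, neg_zero, Real.exp_zero]
    exact Real.exp_le_one_iff.mpr (by linarith)
  · rw [Real.rpow_def_of_pos hx, Real.rpow_def_of_pos (by linarith), ← Real.exp_add,
      ← Real.exp_add, Real.exp_le_exp]
    have h2a : (0:ℝ) < 2*a := by linarith
    have hlog : Real.log (x / (2*a)) ≤ x/(2*a) - 1 := Real.log_le_sub_one_of_pos (by positivity)
    rw [Real.log_div hx.ne' h2a.ne'] at hlog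
    have hmul := mul_le_mul_of_nonneg_right hlog ha
    have : (x/(2*a) - 1) * a = x/2 - a := by field_simp
    nlinarith

lemma L7 {μ x : ℝ} (hμ : 1/2 ≤ μ) (hx : 0 < x) :
    x ^ (μ-1/2) * Real.exp (-(x/2)) ≤ 2 ^ (μ-1/2) * Real.exp 1 * Real.Gamma (μ+1/2) := by
  have ha : (0:ℝ) ≤ μ - 1/2 := by linarith
  calc x ^ (μ-1/2) * Real.exp (-(x/2)) ≤ (2*(μ-1/2)) ^ (μ-1/2) * Real.exp (-(μ-1/2)) :=
        max_bound ha hx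
    _ = 2 ^ (μ-1/2) * ((μ-1/2) ^ (μ-1/2) * Real.exp (-(μ-1/2))) := by
        rw [Real.mul_rpow (by norm_num) ha]; ring
    _ ≤ 2 ^ (μ-1/2) * ((Real.exp ((μ-1/2)+1) * Real.Gamma ((μ-1/2)+1)) * Real.exp (-(μ-1/2))) := by
        have hg := gamma_lb ha
        gcongr
    _ = 2 ^ (μ-1/2) * Real.exp 1 * Real.Gamma (μ+1/2) := by
        rw [show (μ-1/2)+1 = μ+1/2 by ring]
        have h12 : Real.exp (μ+1/2) * Real.exp (-(μ-1/2)) = Real.exp 1 := by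
          rw [← Real.exp_add]; congr 1; ring
        calc 2 ^ (μ-1/2) * ((Real.exp (μ+1/2) * Real.Gamma (μ+1/2)) * Real.exp (-(μ-1/2)))
            = 2 ^ (μ-1/2) * (Real.exp (μ+1/2) * Real.exp (-(μ-1/2))) * Real.Gamma (μ+1/2) := by
              ring
          _ = _ := by rw [h12]

lemma besselA_bounds {μ r : ℝ} (hμ : 1/2 ≤ μ) (hr : 0 < r) :
    0 ≤ (∫ t in (-1:ℝ)..1, (1 - t^2)^(μ-1/2) * Real.exp (-r*t)) ∧
    (∫ t in (-1:ℝ)..1, (1 - t^2)^(μ-1/2) * Real.exp (-r*t)) ≤ 2 * Real.exp r := by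
  have hp : (0:ℝ) ≤ μ - 1/2 := by linarith
  rw [intervalIntegral.integral_of_le (by norm_num : (-1:ℝ) ≤ 1)]
  constructor
  · apply setIntegral_nonneg measurableSet_Ioc
    intro t ht
    have h1 : (0:ℝ) ≤ 1 - t^2 := by nlinarith [ht.1, ht.2]
    exact mul_nonneg (Real.rpow_nonneg h1 _) (Real.exp_pos _).le
  · have hconst : (∫ _t in Ioc (-1:ℝ) 1, Real.exp r) = 2 * Real.exp r := by
      rw [setIntegral_const]
      simp [Real.volume_Ioc]
      norm_num
    rw [← hconst]
    apply integral_mono_of_nonneg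
    · filter_upwards [ae_restrict_mem measurableSet_Ioc] with t ht
      have h1 : (0:ℝ) ≤ 1 - t^2 := by nlinarith [ht.1, ht.2]
      exact mul_nonneg (Real.rpow_nonneg h1 _) (Real.exp_pos _).le
    · exact (integrableOn_const_iff).mpr (Or.inr measure_Ioc_lt_top)
    · filter_upwards [ae_restrict_mem measurableSet_Ioc] with t ht
      have h1 : (0:ℝ) ≤ 1 - t^2 := by nlinarith [ht.1, ht.2]
      have h2 : (1 - t^2 : ℝ) ≤ 1 := by nlinarith [sq_nonneg t]
      have h3 : (1 - t^2)^(μ-1/2) ≤ 1 := Real.rpow_le_one h1 h2 hp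
      have h4 : Real.exp (-r*t) ≤ Real.exp r := Real.exp_le_exp.mpr (by nlinarith [ht.1])
      calc (1 - t^2)^(μ-1/2) * Real.exp (-r*t) ≤ 1 * Real.exp r :=
            mul_le_mul h3 h4 (Real.exp_pos _).le zero_le_one
        _ = Real.exp r := one_mul _

lemma besselB_bounds {μ b : ℝ} (hμ : 1/2 ≤ μ) (hb : 0 < b) :
    0 ≤ (∫ t in Ioi (1:ℝ), Real.exp (-b*t) * (t^2 - 1)^(μ-1/2)) ∧
    (∫ t in Ioi (1:ℝ), Real.exp (-b*t) * (t^2 - 1)^(μ-1/2)) ≤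
      2^(μ-1/2) * (Real.exp (-b) * ((1/b)^(2*μ) * Real.Gamma (2*μ)))
        + 2^(2*μ-1) * (Real.exp (-b) * ((1/b)^(μ+1/2) * Real.Gamma (μ+1/2))) := by
  have hp : (0:ℝ) ≤ μ - 1/2 := by linarith
  have hq1 : (0:ℝ) ≤ 2*μ - 1 := by linarith
  constructor
  · apply setIntegral_nonneg measurableSet_Ioi
    intro t ht
    have h1 : (0:ℝ) ≤ t^2 - 1 := by nlinarith [mem_Ioi.mp ht]
    exact mul_nonneg (Real.exp_pos _).le (Real.rpow_nonneg h1 _)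
  · have hInt1 := integrableOn_laplace1 hq1 hb
    have hInt2 := integrableOn_laplace1 hp hb
    have hval1 := integral_laplace1 hq1 hb
    have hval2 := integral_laplace1 hp hb
    have hgoal : (∫ t in Ioi (1:ℝ), Real.exp (-b*t) * (t^2 - 1)^(μ-1/2)) ≤
        ∫ t in Ioi (1:ℝ), (2^(μ-1/2) * (Real.exp (-(b*t)) * (t-1)^(2*μ-1))
          + 2^(2*μ-1) * (Real.exp (-(b*t)) * (t-1)^(μ-1/2))) := by
      apply integral_mono_of_nonneg
      · filter_upwards [ae_restrict_mem measurableSet_Ioi] with t ht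
        have h1 : (0:ℝ) ≤ t^2 - 1 := by nlinarith [mem_Ioi.mp ht]
        exact mul_nonneg (Real.exp_pos _).le (Real.rpow_nonneg h1 _)
      · exact (hInt1.const_mul _).add (hInt2.const_mul _)
      · filter_upwards [ae_restrict_mem measurableSet_Ioi] with t ht
        have ht1 : (1:ℝ) < t := mem_Ioi.mp ht
        have hy : (0:ℝ) < t - 1 := by linarith
        have key : (t^2 - 1)^(μ-1/2) ≤ 2^(μ-1/2) * (t-1)^(2*μ-1) + 2^(2*μ-1) * (t-1)^(μ-1/2) := by
          have hsum : t^2 - 1 = (t-1)*(t-1) + 2*(t-1) := by ring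
          rcases le_total ((t-1)*(t-1)) (2*(t-1)) with hc | hc
          · have h1 : (t^2-1)^(μ-1/2) ≤ (2*(2*(t-1)))^(μ-1/2) := by
              apply Real.rpow_le_rpow (by nlinarith) (by nlinarith) hp
            have h2 : (2*(2*(t-1)))^(μ-1/2) = 2^(μ-1/2) * (2^(μ-1/2) * (t-1)^(μ-1/2)) := by
              rw [Real.mul_rpow (by norm_num) (by nlinarith), Real.mul_rpow (by norm_num) hy.le]
            have h3 : (2:ℝ)^(μ-1/2) * (2:ℝ)^(μ-1/2) = 2^(2*μ-1) := by
              rw [← Real.rpow_add (by norm_num : (0:ℝ) < 2)]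
              congr 1; ring
            have h4 : (0:ℝ) ≤ 2^(μ-1/2) * (t-1)^(2*μ-1) := by positivity
            nlinarith [h1, Real.rpow_nonneg (show (0:ℝ) ≤ t-1 by linarith) (μ-1/2),
              Real.rpow_nonneg (show (0:ℝ) ≤ 2 by norm_num) (μ-1/2)]
          · have h1 : (t^2-1)^(μ-1/2) ≤ (2*((t-1)*(t-1)))^(μ-1/2) := by
              apply Real.rpow_le_rpow (by nlinarith) (by nlinarith) hp
            have h2 : (2*((t-1)*(t-1)))^(μ-1/2) = 2^(μ-1/2) * (t-1)^(2*μ-1) := by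
              rw [Real.mul_rpow (by norm_num) (by nlinarith),
                Real.mul_rpow hy.le hy.le, ← Real.rpow_add hy]
              congr 2; ring
            have h4 : (0:ℝ) ≤ 2^(2*μ-1) * (t-1)^(μ-1/2) := by positivity
            nlinarith [h1]
        have hexp : Real.exp (-b*t) = Real.exp (-(b*t)) := by rw [neg_mul]
        rw [hexp]
        have := mul_le_mul_of_nonneg_left key (Real.exp_pos (-(b*t))).le
        calc Real.exp (-(b*t)) * (t^2-1)^(μ-1/2)
            ≤ Real.exp (-(b*t)) * (2^(μ-1/2) * (t-1)^(2*μ-1) + 2^(2*μ-1) * (t-1)^(μ-1/2)) := this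
          _ = 2^(μ-1/2) * (Real.exp (-(b*t)) * (t-1)^(2*μ-1))
              + 2^(2*μ-1) * (Real.exp (-(b*t)) * (t-1)^(μ-1/2)) := by ring
    refine hgoal.trans ?_
    rw [integral_add (hInt1.const_mul _) (hInt2.const_mul _), integral_const_mul, integral_const_mul,
      hval1, hval2]
    rw [show (2*μ-1+1 : ℝ) = 2*μ by ring, show (μ-1/2+1 : ℝ) = μ+1/2 by ring]

/-- There is `C > 0` such that for all `μ ≥ 1/2` and all `r, r' > 0` with
`r' ≥ 4r`, one has `I_μ(r) · K_μ(r') ≤ C · (2r/r')^{μ} · e^{-r'/4}`. -/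
theorem statement11 :
    ∃ C : ℝ, 0 < C ∧ ∀ μ r r' : ℝ, 1 / 2 ≤ μ → 0 < r → 0 < r' → 4 * r ≤ r' →
      besselI μ r * besselK μ r' ≤ C * (2 * r / r') ^ μ * Real.exp (-r' / 4) := by
  have hπ : (0:ℝ) < Real.sqrt π := Real.sqrt_pos.mpr Real.pi_pos
  have hs2 : (0:ℝ) < Real.sqrt 2 := by positivity
  refine ⟨(1 + 2*Real.exp 1) / (Real.sqrt 2 * Real.sqrt π) + Real.exp 1, by positivity, ?_⟩
  intro μ r r' hμ hr hr' h4
  have hΓh : (0:ℝ) < Real.Gamma (μ+1/2) := Real.Gamma_pos_of_pos (by linarith)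
  have hΓm : (0:ℝ) < Real.Gamma μ := Real.Gamma_pos_of_pos (by linarith)
  have hΓ2 : (0:ℝ) < Real.Gamma (2*μ) := Real.Gamma_pos_of_pos (by linarith)
  obtain ⟨hA0, hA1⟩ := besselA_bounds hμ hr
  obtain ⟨hB0, hB1⟩ := besselB_bounds hμ hr'
  have hw : (0:ℝ) < 2^μ := Real.rpow_pos_of_pos (by norm_num) μ
  have hv : (0:ℝ) < (1/r')^μ := Real.rpow_pos_of_pos (by positivity) μ
  have hu : (0:ℝ) < r^μ := Real.rpow_pos_of_pos hr μ
  have hneg : (2:ℝ)^(-μ) = ((2:ℝ)^μ)⁻¹ := Real.rpow_neg (by norm_num) μ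
  have hpa : (2:ℝ)^(μ-1/2) = (2:ℝ)^μ / Real.sqrt 2 := by
    rw [Real.rpow_sub (by norm_num : (0:ℝ) < 2), Real.sqrt_eq_rpow]
  have hpb : (2:ℝ)^(2*μ-1) = (2:ℝ)^μ * (2:ℝ)^μ / 2 := by
    rw [show (2*μ-1:ℝ) = μ + μ - 1 by ring, Real.rpow_sub (by norm_num : (0:ℝ) < 2),
      Real.rpow_add (by norm_num : (0:ℝ) < 2), Real.rpow_one]
  have hv2 : ((1:ℝ)/r')^(2*μ) = (1/r')^μ * (1/r')^μ := by
    rw [show (2*μ:ℝ) = μ + μ by ring, Real.rpow_add (by positivity)]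
  have hvb : ((1:ℝ)/r')^(μ+1/2) = (1/r')^μ * (1/r')^((1:ℝ)/2) := by
    rw [Real.rpow_add (by positivity)]
  have hrv : (r':ℝ)^μ = ((1/r')^μ)⁻¹ := by
    rw [one_div, Real.inv_rpow hr'.le, inv_inv]
  have ht : (2*r/r')^μ = (2:ℝ)^μ * (r^μ * (1/r')^μ) := by
    rw [show 2*r/r' = 2*(r*(1/r')) by ring, Real.mul_rpow (by norm_num) (by positivity),
      Real.mul_rpow hr.le (by positivity)]
  have hdup : Real.Gamma (2*μ)
      = Real.Gamma μ * Real.Gamma (μ+1/2) * ((2:ℝ)^μ * (2:ℝ)^μ) / (2*Real.sqrt π) := by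
    have h := Real.Gamma_mul_Gamma_add_half μ
    have h2 : (2:ℝ)^(1-2*μ) = 2/((2:ℝ)^μ * (2:ℝ)^μ) := by
      rw [show (1-2*μ:ℝ) = 1 - (μ+μ) by ring, Real.rpow_sub (by norm_num : (0:ℝ) < 2),
        Real.rpow_add (by norm_num : (0:ℝ) < 2), Real.rpow_one]
    rw [h2] at h
    rw [h]
    field_simp
  have hexp1 : Real.exp r * Real.exp (-r') ≤ Real.exp (-r'/4) := by
    rw [← Real.exp_add]; exact Real.exp_le_exp.mpr (by linarith)
  -- first piece
  have hS1 : (2^(-μ) * r^μ / (Real.sqrt π * Real.Gamma (μ+1/2))) *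
      (Real.sqrt π * 2^(-μ) * r'^μ / Real.Gamma (μ+1/2)) *
      ((2 * Real.exp r) * (2^(μ-1/2) * (Real.exp (-r') * ((1/r')^(2*μ) * Real.Gamma (2*μ)))))
      ≤ (1 + 2*Real.exp 1)/(Real.sqrt 2 * Real.sqrt π)
          * ((2:ℝ)^μ * (r^μ * (1/r')^μ) * Real.exp (-r'/4)) := by
    have heq : (2^(-μ) * r^μ / (Real.sqrt π * Real.Gamma (μ+1/2))) *
        (Real.sqrt π * 2^(-μ) * r'^μ / Real.Gamma (μ+1/2)) *
        ((2 * Real.exp r) * (2^(μ-1/2) * (Real.exp (-r') * ((1/r')^(2*μ) * Real.Gamma (2*μ)))))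
        = (Real.Gamma μ / Real.Gamma (μ+1/2)) * (((2:ℝ)^μ * (r^μ * (1/r')^μ)) *
            ((Real.exp r * Real.exp (-r')) * (Real.sqrt 2 * Real.sqrt π)⁻¹)) := by
      rw [hneg, hpa, hv2, hrv, hdup]
      field_simp
    rw [heq]
    have hΓr : Real.Gamma μ / Real.Gamma (μ+1/2) ≤ 1 + 2*Real.exp 1 := by
      rw [div_le_iff₀ hΓh]; exact gamma_ratio hμ
    calc (Real.Gamma μ / Real.Gamma (μ+1/2)) * (((2:ℝ)^μ * (r^μ * (1/r')^μ)) *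
            ((Real.exp r * Real.exp (-r')) * (Real.sqrt 2 * Real.sqrt π)⁻¹))
        ≤ (1 + 2*Real.exp 1) * (((2:ℝ)^μ * (r^μ * (1/r')^μ)) *
            (Real.exp (-r'/4) * (Real.sqrt 2 * Real.sqrt π)⁻¹)) := by
          gcongr
      _ = (1 + 2*Real.exp 1)/(Real.sqrt 2 * Real.sqrt π)
          * ((2:ℝ)^μ * (r^μ * (1/r')^μ) * Real.exp (-r'/4)) := by
          rw [div_eq_mul_inv]; ring
  -- second piece
  have hS2 : (2^(-μ) * r^μ / (Real.sqrt π * Real.Gamma (μ+1/2))) *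
      (Real.sqrt π * 2^(-μ) * r'^μ / Real.Gamma (μ+1/2)) *
      ((2 * Real.exp r) * (2^(2*μ-1) * (Real.exp (-r') * ((1/r')^(μ+1/2) * Real.Gamma (μ+1/2)))))
      ≤ Real.exp 1 * ((2:ℝ)^μ * (r^μ * (1/r')^μ) * Real.exp (-r'/4)) := by
    have heq : (2^(-μ) * r^μ / (Real.sqrt π * Real.Gamma (μ+1/2))) *
        (Real.sqrt π * 2^(-μ) * r'^μ / Real.Gamma (μ+1/2)) *
        ((2 * Real.exp r) * (2^(2*μ-1) * (Real.exp (-r') * ((1/r')^(μ+1/2) * Real.Gamma (μ+1/2)))))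
        = (r^μ * (1/r')^((1:ℝ)/2) / Real.Gamma (μ+1/2)) * (Real.exp r * Real.exp (-r')) := by
      rw [hneg, hpb, hvb, hrv]
      field_simp
    rw [heq]
    have hr4 : Real.exp r * Real.exp (-r')
        = Real.exp (r - r'/4) * (Real.exp (-(r'/2)) * Real.exp (-r'/4)) := by
      rw [← Real.exp_add, ← Real.exp_add, ← Real.exp_add]; congr 1; ring
    have hL : Real.exp (-(r'/2))
        ≤ (2^(μ-1/2) * Real.exp 1 * Real.Gamma (μ+1/2)) * (1/r')^(μ-1/2) := by
      have h7 := L7 hμ hr'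
      have hpow : (0:ℝ) < r'^(μ-1/2) := Real.rpow_pos_of_pos hr' _
      have hinv : ((1:ℝ)/r')^(μ-1/2) = (r'^(μ-1/2))⁻¹ := by rw [one_div, Real.inv_rpow hr'.le]
      rw [hinv, ← div_eq_mul_inv, le_div_iff₀ hpow]
      calc Real.exp (-(r'/2)) * r'^(μ-1/2) = r'^(μ-1/2) * Real.exp (-(r'/2)) := by ring
        _ ≤ _ := h7
    have hone : Real.exp (r - r'/4) ≤ 1 := Real.exp_le_one_iff.mpr (by linarith)
    have hvhalf : (0:ℝ) < (1/r')^((1:ℝ)/2) := Real.rpow_pos_of_pos (by positivity) _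
    calc (r^μ * (1/r')^((1:ℝ)/2) / Real.Gamma (μ+1/2)) * (Real.exp r * Real.exp (-r'))
        = (r^μ * (1/r')^((1:ℝ)/2) / Real.Gamma (μ+1/2)) *
            (Real.exp (r - r'/4) * (Real.exp (-(r'/2)) * Real.exp (-r'/4))) := by rw [hr4]
      _ ≤ (r^μ * (1/r')^((1:ℝ)/2) / Real.Gamma (μ+1/2)) *
            (1 * ((((2:ℝ)^(μ-1/2) * Real.exp 1 * Real.Gamma (μ+1/2)) * (1/r')^(μ-1/2))
              * Real.exp (-r'/4))) := by
          apply mul_le_mul_of_nonneg_left _ (by positivity)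
          exact mul_le_mul hone (mul_le_mul_of_nonneg_right hL (Real.exp_pos _).le)
            (by positivity) zero_le_one
      _ = Real.exp 1 * ((2:ℝ)^(μ-1/2) * (r^μ * ((1/r')^((1:ℝ)/2) * (1/r')^(μ-1/2)))
            * Real.exp (-r'/4)) := by
          field_simp
      _ = Real.exp 1 * ((2:ℝ)^(μ-1/2) * (r^μ * (1/r')^μ) * Real.exp (-r'/4)) := by
          rw [← Real.rpow_add (by positivity : (0:ℝ) < 1/r'), show (1:ℝ)/2 + (μ-1/2) = μ by ring]
      _ ≤ Real.exp 1 * ((2:ℝ)^μ * (r^μ * (1/r')^μ) * Real.exp (-r'/4)) := by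
          have hbp : (2:ℝ)^(μ-1/2) ≤ (2:ℝ)^μ :=
            Real.rpow_le_rpow_of_exponent_le (by norm_num) (by linarith)
          exact mul_le_mul_of_nonneg_left (mul_le_mul_of_nonneg_right
            (mul_le_mul_of_nonneg_right hbp (by positivity)) (Real.exp_pos _).le)
            (Real.exp_pos _).le
  -- assemble
  have hcI : (0:ℝ) ≤ 2^(-μ) * r^μ / (Real.sqrt π * Real.Gamma (μ+1/2)) := by positivity
  have hcK : (0:ℝ) ≤ Real.sqrt π * 2^(-μ) * r'^μ / Real.Gamma (μ+1/2) := by positivity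
  have hUB0 : (0:ℝ) ≤ 2^(μ-1/2) * (Real.exp (-r') * ((1/r')^(2*μ) * Real.Gamma (2*μ)))
        + 2^(2*μ-1) * (Real.exp (-r') * ((1/r')^(μ+1/2) * Real.Gamma (μ+1/2))) := by positivity
  show (2 ^ (-μ) * r ^ μ / (Real.sqrt π * Real.Gamma (μ + 1 / 2)) *
      ∫ t in (-1 : ℝ)..1, (1 - t ^ 2) ^ (μ - 1 / 2) * Real.exp (-r * t)) *
    ((Real.sqrt π * 2 ^ (-μ) * r' ^ μ / Real.Gamma (μ + 1 / 2)) *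
      ∫ t in Ioi (1 : ℝ), Real.exp (-r' * t) * (t ^ 2 - 1) ^ (μ - 1 / 2)) ≤ _
  calc (2 ^ (-μ) * r ^ μ / (Real.sqrt π * Real.Gamma (μ + 1 / 2)) *
      ∫ t in (-1 : ℝ)..1, (1 - t ^ 2) ^ (μ - 1 / 2) * Real.exp (-r * t)) *
    ((Real.sqrt π * 2 ^ (-μ) * r' ^ μ / Real.Gamma (μ + 1 / 2)) *
      ∫ t in Ioi (1 : ℝ), Real.exp (-r' * t) * (t ^ 2 - 1) ^ (μ - 1 / 2))
      = ((2 ^ (-μ) * r ^ μ / (Real.sqrt π * Real.Gamma (μ + 1 / 2))) *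
          (Real.sqrt π * 2 ^ (-μ) * r' ^ μ / Real.Gamma (μ + 1 / 2))) *
        ((∫ t in (-1 : ℝ)..1, (1 - t ^ 2) ^ (μ - 1 / 2) * Real.exp (-r * t)) *
          ∫ t in Ioi (1 : ℝ), Real.exp (-r' * t) * (t ^ 2 - 1) ^ (μ - 1 / 2)) := by ring
    _ ≤ ((2 ^ (-μ) * r ^ μ / (Real.sqrt π * Real.Gamma (μ + 1 / 2))) *
          (Real.sqrt π * 2 ^ (-μ) * r' ^ μ / Real.Gamma (μ + 1 / 2))) *
        ((2 * Real.exp r) *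
          (2^(μ-1/2) * (Real.exp (-r') * ((1/r')^(2*μ) * Real.Gamma (2*μ)))
            + 2^(2*μ-1) * (Real.exp (-r') * ((1/r')^(μ+1/2) * Real.Gamma (μ+1/2))))) := by
        apply mul_le_mul_of_nonneg_left _ (mul_nonneg hcI hcK)
        exact mul_le_mul hA1 hB1 hB0 (by positivity)
    _ = (2^(-μ) * r^μ / (Real.sqrt π * Real.Gamma (μ+1/2))) *
          (Real.sqrt π * 2^(-μ) * r'^μ / Real.Gamma (μ+1/2)) *
          ((2 * Real.exp r) * (2^(μ-1/2) * (Real.exp (-r') * ((1/r')^(2*μ) * Real.Gamma (2*μ)))))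
        + (2^(-μ) * r^μ / (Real.sqrt π * Real.Gamma (μ+1/2))) *
          (Real.sqrt π * 2^(-μ) * r'^μ / Real.Gamma (μ+1/2)) *
          ((2 * Real.exp r) *
            (2^(2*μ-1) * (Real.exp (-r') * ((1/r')^(μ+1/2) * Real.Gamma (μ+1/2))))) := by ring
    _ ≤ (1 + 2*Real.exp 1)/(Real.sqrt 2 * Real.sqrt π)
          * ((2:ℝ)^μ * (r^μ * (1/r')^μ) * Real.exp (-r'/4))
        + Real.exp 1 * ((2:ℝ)^μ * (r^μ * (1/r')^μ) * Real.exp (-r'/4)) := add_le_add hS1 hS2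
    _ = ((1 + 2*Real.exp 1) / (Real.sqrt 2 * Real.sqrt π) + Real.exp 1) * (2*r/r')^μ
          * Real.exp (-r'/4) := by rw [ht]; ring
end

section
/- Let d ≥ 3 be an integer, let (μ_j)_{j∈ℕ} be a nondecreasing sequence of reals with μ_j ≥ 1/2 for all j and μ_0 > 0, and suppose there exists C > 0 such that #{j : μ_j ≤ μ} ≤ C·μ^{d-1} for all μ > 1. Let Ω be a set and let (u_j)_{j∈ℕ} be functions u_j : Ω → ℂ satisfying |u_j(y)| ≤ C·μ_j^{(d-1)/2} for all j and all y ∈ Ω. Then there exists a constant C' > 0 such that for all y, y' ∈ Ω and all reals r, r' > 0 with r' ≥ 4r, the series ∑_{j} |u_j(y)| · |u_j(y')| · I_{μ_j}(r) · K_{μ_j}(r') converges and its sum is at most C' · (2r/r')^{μ_0} · e^{-r'/4}. -/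
open Real

open MeasureTheory Set

lemma aux_rpow_exp_le_Gamma {a y : ℝ} (ha : 0 ≤ a) (hy : 0 < y) :
    y ^ a * Real.exp (-y) ≤ Real.Gamma (a + 1) := by
  have h1 : Real.Gamma (a + 1) = ∫ x in Ioi (0:ℝ), Real.exp (-x) * x ^ a := by
    rw [Real.Gamma_eq_integral (by linarith)]; simp
  have hint : IntegrableOn (fun x : ℝ => Real.exp (-x) * x ^ a) (Ioi 0) := by
    have := Real.GammaIntegral_convergent (s := a + 1) (by linarith)
    simpa using this
  have hsub : Ioi y ⊆ Ioi (0:ℝ) := Ioi_subset_Ioi hy.le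
  have h2 : (∫ x in Ioi y, Real.exp (-x) * x ^ a) ≤ ∫ x in Ioi (0:ℝ), Real.exp (-x) * x ^ a := by
    apply setIntegral_mono_set hint
    · filter_upwards [ae_restrict_mem measurableSet_Ioi] with x hx
      have : (0:ℝ) < x := hx
      positivity
    · exact HasSubset.Subset.eventuallyLE hsub
  have h3 : y ^ a * Real.exp (-y) ≤ ∫ x in Ioi y, Real.exp (-x) * x ^ a := by
    have : (∫ x in Ioi y, Real.exp (-x) * y ^ a) ≤ ∫ x in Ioi y, Real.exp (-x) * x ^ a := by
      apply setIntegral_mono_on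
      · have : IntegrableOn (fun x : ℝ => Real.exp (-x)) (Ioi y) := by
          simpa using exp_neg_integrableOn_Ioi y one_pos
        exact this.mul_const _
      · exact hint.mono_set hsub
      · exact measurableSet_Ioi
      · intro x hx
        have hx' : y ≤ x := (mem_Ioi.mp hx).le
        exact mul_le_mul_of_nonneg_left (Real.rpow_le_rpow hy.le hx' ha) (Real.exp_nonneg _)
    calc y ^ a * Real.exp (-y) = (∫ x in Ioi y, Real.exp (-x)) * y ^ a := by
          rw [integral_exp_neg_Ioi]; ring
      _ = ∫ x in Ioi y, Real.exp (-x) * y ^ a := by rw [integral_mul_const]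
      _ ≤ _ := this
  linarith [h1 ▸ (h3.trans h2)]

lemma aux_Gamma_ratio {μ : ℝ} (hμ : 1/2 ≤ μ) : Real.Gamma μ ≤ 16 * Real.Gamma (μ + 1/2) := by
  have hμ0 : (0:ℝ) < μ := by linarith
  have hint : IntegrableOn (fun x : ℝ => Real.exp (-x) * x ^ (μ - 1)) (Ioi 0) := by
    simpa using Real.GammaIntegral_convergent hμ0
  have hint2 : IntegrableOn (fun x : ℝ => Real.exp (-x) * x ^ (μ + 1/2 - 1)) (Ioi 0) :=
    Real.GammaIntegral_convergent (s := μ + 1/2) (by linarith)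
  have hsplit : Real.Gamma μ = (∫ x in Ioc (0:ℝ) 1, Real.exp (-x) * x ^ (μ - 1))
      + ∫ x in Ioi (1:ℝ), Real.exp (-x) * x ^ (μ - 1) := by
    rw [Real.Gamma_eq_integral hμ0]
    rw [← Ioc_union_Ioi_eq_Ioi (zero_le_one : (0:ℝ) ≤ 1)]
    rw [setIntegral_union (Ioc_disjoint_Ioi le_rfl) measurableSet_Ioi
      (hint.mono_set Ioc_subset_Ioi_self) (hint.mono_set (Ioi_subset_Ioi zero_le_one))]
  have hpart1 : (∫ x in Ioc (0:ℝ) 1, Real.exp (-x) * x ^ (μ - 1)) ≤ 2 := by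
    have hb : (∫ x in Ioc (0:ℝ) 1, x ^ (μ - 1)) = 1 / μ := by
      rw [← intervalIntegral.integral_of_le (zero_le_one : (0:ℝ) ≤ 1)]
      rw [integral_rpow (Or.inl (by linarith : (-1:ℝ) < μ - 1))]
      rw [sub_add_cancel]
      rw [Real.zero_rpow (ne_of_gt hμ0), Real.one_rpow]
      ring
    have hmono : (∫ x in Ioc (0:ℝ) 1, Real.exp (-x) * x ^ (μ - 1))
        ≤ ∫ x in Ioc (0:ℝ) 1, x ^ (μ - 1) := by
      apply integral_mono_of_nonneg
      · filter_upwards [ae_restrict_mem measurableSet_Ioc] with x hx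
        have : (0:ℝ) < x := hx.1
        positivity
      · have : IntegrableOn (fun x : ℝ => x ^ (μ - 1)) (Ioc (0:ℝ) 1) := by
          rw [← intervalIntegrable_iff_integrableOn_Ioc_of_le (zero_le_one : (0:ℝ) ≤ 1)]
          exact intervalIntegral.intervalIntegrable_rpow' (by linarith)
        exact this
      · filter_upwards [ae_restrict_mem measurableSet_Ioc] with x hx
        have hx0 : (0:ℝ) < x := hx.1
        have : Real.exp (-x) ≤ 1 := by
          rw [Real.exp_le_one_iff]; linarith
        calc Real.exp (-x) * x ^ (μ - 1) ≤ 1 * x ^ (μ - 1) := by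
              exact mul_le_mul_of_nonneg_right this (Real.rpow_nonneg hx0.le _)
          _ = x ^ (μ - 1) := one_mul _
    have : (1:ℝ)/μ ≤ 2 := by
      rw [div_le_iff₀ hμ0]; linarith
    linarith [hmono.trans (le_of_eq hb)]
  have hpart2 : (∫ x in Ioi (1:ℝ), Real.exp (-x) * x ^ (μ - 1)) ≤ Real.Gamma (μ + 1/2) := by
    rw [Real.Gamma_eq_integral (by linarith : (0:ℝ) < μ + 1/2)]
    have h1 : (∫ x in Ioi (1:ℝ), Real.exp (-x) * x ^ (μ - 1))
        ≤ ∫ x in Ioi (1:ℝ), Real.exp (-x) * x ^ (μ + 1/2 - 1) := by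
      apply integral_mono_of_nonneg
      · filter_upwards [ae_restrict_mem measurableSet_Ioi] with x hx
        have : (0:ℝ) < x := lt_trans zero_lt_one hx
        positivity
      · exact hint2.mono_set (Ioi_subset_Ioi zero_le_one)
      · filter_upwards [ae_restrict_mem measurableSet_Ioi] with x hx
        have hx1 : (1:ℝ) ≤ x := (mem_Ioi.mp hx).le
        apply mul_le_mul_of_nonneg_left _ (Real.exp_nonneg _)
        exact Real.rpow_le_rpow_of_exponent_le hx1 (by linarith)
    have h2 : (∫ x in Ioi (1:ℝ), Real.exp (-x) * x ^ (μ + 1/2 - 1))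
        ≤ ∫ x in Ioi (0:ℝ), Real.exp (-x) * x ^ (μ + 1/2 - 1) := by
      apply setIntegral_mono_set
      · exact hint2
      · filter_upwards [ae_restrict_mem measurableSet_Ioi] with x hx
        have : (0:ℝ) < x := hx
        positivity
      · exact HasSubset.Subset.eventuallyLE (Ioi_subset_Ioi zero_le_one)
    exact h1.trans h2
  have hlow : Real.exp (-2 : ℝ) ≤ Real.Gamma (μ + 1/2) := by
    rw [Real.Gamma_eq_integral (by linarith : (0:ℝ) < μ + 1/2)]
    have h2 : (∫ x in Ioc (1:ℝ) 2, Real.exp (-x) * x ^ (μ + 1/2 - 1))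
        ≤ ∫ x in Ioi (0:ℝ), Real.exp (-x) * x ^ (μ + 1/2 - 1) := by
      apply setIntegral_mono_set
      · exact hint2
      · filter_upwards [ae_restrict_mem measurableSet_Ioi] with x hx
        have : (0:ℝ) < x := hx
        positivity
      · refine HasSubset.Subset.eventuallyLE (fun x hx => ?_)
        exact lt_trans zero_lt_one hx.1
    refine le_trans ?_ h2
    have hconst : (∫ x in Ioc (1:ℝ) 2, Real.exp (-2 : ℝ)) = Real.exp (-2 : ℝ) := by
      simp [Real.volume_Ioc]
      norm_num
    rw [← hconst]
    apply integral_mono_of_nonneg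
    · filter_upwards with x; positivity
    · exact hint2.mono_set (fun x hx => lt_trans zero_lt_one hx.1)
    · filter_upwards [ae_restrict_mem measurableSet_Ioc] with x hx
      have hx1 : (1:ℝ) ≤ x := hx.1.le
      have hx2 : x ≤ 2 := hx.2
      have e1 : Real.exp (-2:ℝ) ≤ Real.exp (-x) := by
        apply Real.exp_le_exp.mpr; linarith
      have e2 : (1:ℝ) ≤ x ^ (μ + 1/2 - 1) := by
        apply Real.one_le_rpow hx1 (by linarith)
      calc Real.exp (-2:ℝ) = Real.exp (-2:ℝ) * 1 := (mul_one _).symm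
        _ ≤ Real.exp (-x) * x ^ (μ + 1/2 - 1) := by
            exact mul_le_mul e1 e2 zero_le_one (Real.exp_nonneg _)
  have he2 : (2:ℝ) ≤ 15 * Real.exp (-2:ℝ) := by
    have hexp2 : Real.exp 2 < 7.5 := by
      have h2 : Real.exp 2 = Real.exp 1 * Real.exp 1 := by
        rw [← Real.exp_add]; norm_num
      have h := Real.exp_one_lt_d9
      nlinarith [Real.exp_pos 1]
    have hmul : Real.exp (-2:ℝ) * Real.exp 2 = 1 := by
      rw [← Real.exp_add]; norm_num
    nlinarith [Real.exp_pos 2, Real.exp_pos (-2:ℝ)]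
  have : Real.Gamma μ ≤ Real.Gamma (μ + 1/2) + 2 := by
    rw [hsplit]; linarith
  nlinarith [hlow, he2]


lemma aux_Gamma_half_pos {μ : ℝ} (hμ : 1/2 ≤ μ) : 0 < Real.Gamma (μ + 1/2) :=
  Real.Gamma_pos_of_pos (by linarith)

lemma besselI_nonneg {μ r : ℝ} (hμ : 1/2 ≤ μ) (hr : 0 < r) : 0 ≤ besselI μ r := by
  unfold besselI
  apply mul_nonneg
  · apply div_nonneg
    · positivity
    · exact mul_nonneg (Real.sqrt_nonneg _) (aux_Gamma_half_pos hμ).le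
  · apply intervalIntegral.integral_nonneg (by norm_num : (-1:ℝ) ≤ 1)
    intro x hx
    have h1 : x^2 ≤ 1 := by
      rcases hx with ⟨h1, h2⟩
      nlinarith
    have : (0:ℝ) ≤ 1 - x^2 := by linarith
    positivity

lemma besselK_nonneg {μ r : ℝ} (hμ : 1/2 ≤ μ) (hr : 0 < r) : 0 ≤ besselK μ r := by
  unfold besselK
  apply mul_nonneg
  · apply div_nonneg
    · positivity
    · exact (aux_Gamma_half_pos hμ).le
  · apply setIntegral_nonneg measurableSet_Ioi
    intro x hx
    have hx1 : (1:ℝ) < x := hx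
    have : (0:ℝ) ≤ x^2 - 1 := by nlinarith
    positivity

lemma besselI_le {μ r : ℝ} (hμ : 1/2 ≤ μ) (hr : 0 < r) :
    besselI μ r ≤ 2 ^ (-μ) * r ^ μ / (Real.sqrt π * Real.Gamma (μ + 1/2)) * (2 * Real.exp r) := by
  unfold besselI
  apply mul_le_mul_of_nonneg_left _ (by
    apply div_nonneg
    · positivity
    · exact mul_nonneg (Real.sqrt_nonneg _) (aux_Gamma_half_pos hμ).le)
  have hb : ∀ x ∈ Set.uIoc (-1:ℝ) 1, ‖(1 - x ^ 2) ^ (μ - 1/2) * Real.exp (-r * x)‖ ≤ Real.exp r := by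
    intro x hx
    rw [Set.uIoc_of_le (by norm_num : (-1:ℝ) ≤ 1)] at hx
    obtain ⟨h1, h2⟩ := hx
    have hx2 : x^2 ≤ 1 := by nlinarith
    have hbase : (0:ℝ) ≤ 1 - x^2 := by linarith
    rw [Real.norm_eq_abs, abs_of_nonneg (by positivity)]
    have e1 : (1 - x ^ 2) ^ (μ - 1/2) ≤ 1 :=
      Real.rpow_le_one hbase (by nlinarith [sq_nonneg x]) (by linarith)
    have e2 : Real.exp (-r * x) ≤ Real.exp r := by
      apply Real.exp_le_exp.mpr
      nlinarith
    calc (1 - x ^ 2) ^ (μ - 1/2) * Real.exp (-r * x) ≤ 1 * Real.exp r :=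
          mul_le_mul e1 e2 (Real.exp_nonneg _) zero_le_one
      _ = Real.exp r := one_mul _
  have := intervalIntegral.norm_integral_le_of_norm_le_const hb
  rw [Real.norm_eq_abs] at this
  have h2 : |(1:ℝ) - (-1)| = 2 := by norm_num
  rw [h2] at this
  calc (∫ t in (-1:ℝ)..1, (1 - t ^ 2) ^ (μ - 1/2) * Real.exp (-r * t))
      ≤ |∫ t in (-1:ℝ)..1, (1 - t ^ 2) ^ (μ - 1/2) * Real.exp (-r * t)| := le_abs_self _
    _ ≤ Real.exp r * 2 := this
    _ = 2 * Real.exp r := by ring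

lemma integral_Ioi_shift (f : ℝ → ℝ) :
    (∫ t in Ioi (1:ℝ), f (t - 1)) = ∫ s in Ioi (0:ℝ), f s := by
  rw [← integral_indicator measurableSet_Ioi, ← integral_indicator measurableSet_Ioi]
  have h : ∀ t : ℝ, (Ioi (1:ℝ)).indicator (fun t => f (t - 1)) t
      = (Ioi (0:ℝ)).indicator f (t - 1) := by
    intro t
    by_cases ht : t ∈ Ioi (1:ℝ)
    · rw [Set.indicator_of_mem ht, Set.indicator_of_mem (by simpa using sub_pos.mpr (mem_Ioi.mp ht))]
    · rw [Set.indicator_of_notMem ht, Set.indicator_of_notMem (by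
        simp only [mem_Ioi, not_lt] at *
        linarith [ht])]
  simp_rw [h]
  exact integral_sub_right_eq_self ((Ioi (0:ℝ)).indicator f) 1

lemma aux_integrableOn_Ioi0 {s b : ℝ} (hs : 0 ≤ s) (hb : 0 < b) :
    IntegrableOn (fun t : ℝ => t ^ s * Real.exp (-(b * t))) (Ioi 0) := by
  have := integrableOn_rpow_mul_exp_neg_mul_rpow (p := 1) (s := s) (b := b)
    (by linarith) one_pos hb
  simpa [Real.rpow_one, neg_mul] using this

lemma besselK_le {μ r' : ℝ} (hμ : 1/2 ≤ μ) (hr' : 0 < r') :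
    besselK μ r' ≤ (Real.sqrt π * 2 ^ (-μ) * r' ^ μ / Real.Gamma (μ + 1/2)) *
      (3 ^ (μ - 1/2) * Real.exp (-r') * ((1/r') ^ (μ + 1/2) * Real.Gamma (μ + 1/2))
        + Real.exp (-r'/2) * ((1/(3*r'/4)) ^ (2*μ) * Real.Gamma (2*μ))) := by
  unfold besselK
  apply mul_le_mul_of_nonneg_left _ (by
    apply div_nonneg
    · positivity
    · exact (aux_Gamma_half_pos hμ).le)
  set a := μ - 1/2 with ha
  have ha0 : 0 ≤ a := by simp [ha]; linarith
  set g1 : ℝ → ℝ := fun t => 3 ^ a * Real.exp (-r') * ((t-1) ^ a * Real.exp (-(r' * (t-1))))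
    with hg1
  set g2 : ℝ → ℝ := fun t => Real.exp (-r'/2) * (t ^ (2*μ-1) * Real.exp (-(3*r'/4 * t)))
    with hg2
  have hg1int : IntegrableOn g1 (Ioi 1) := by
    have hcore : Integrable ((Ioi (0:ℝ)).indicator (fun s => s ^ a * Real.exp (-(r' * s)))) := by
      rw [integrable_indicator_iff measurableSet_Ioi]
      exact aux_integrableOn_Ioi0 ha0 hr'
    have hshift := hcore.comp_sub_right 1
    have heq : (Ioi (1:ℝ)).indicator (fun t => (t-1) ^ a * Real.exp (-(r' * (t-1))))
        = fun t => (Ioi (0:ℝ)).indicator (fun s => s ^ a * Real.exp (-(r' * s))) (t - 1) := by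
      funext t
      by_cases ht : t ∈ Ioi (1:ℝ)
      · rw [Set.indicator_of_mem ht, Set.indicator_of_mem (by simpa using sub_pos.mpr (mem_Ioi.mp ht))]
      · rw [Set.indicator_of_notMem ht, Set.indicator_of_notMem (by
          simp only [mem_Ioi, not_lt] at *
          linarith [ht])]
    have : IntegrableOn (fun t : ℝ => (t-1) ^ a * Real.exp (-(r' * (t-1)))) (Ioi 1) := by
      exact (integrable_indicator_iff measurableSet_Ioi).mp (heq ▸ hshift)
    exact this.const_mul _
  have hg2int : IntegrableOn g2 (Ioi 1) := by
    have hcore : IntegrableOn (fun t : ℝ => t ^ (2*μ-1) * Real.exp (-(3*r'/4 * t))) (Ioi 0) :=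
      aux_integrableOn_Ioi0 (by linarith) (by linarith)
    exact (hcore.mono_set (Ioi_subset_Ioi zero_le_one)).const_mul _
  have hval1 : (∫ t in Ioi (1:ℝ), g1 t)
      = 3 ^ a * Real.exp (-r') * ((1/r') ^ (μ + 1/2) * Real.Gamma (μ + 1/2)) := by
    rw [hg1]
    rw [integral_const_mul]
    congr 1
    have := integral_Ioi_shift (fun s => s ^ a * Real.exp (-(r' * s)))
    rw [this]
    have := Real.integral_rpow_mul_exp_neg_mul_Ioi (a := μ + 1/2) (r := r')
      (by linarith) hr'
    rw [← this]
    apply setIntegral_congr_fun measurableSet_Ioi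
    intro x hx
    have : μ + 1/2 - 1 = a := by rw [ha]; ring
    rw [this]
  have hval2 : (∫ t in Ioi (1:ℝ), g2 t)
      ≤ Real.exp (-r'/2) * ((1/(3*r'/4)) ^ (2*μ) * Real.Gamma (2*μ)) := by
    rw [hg2, integral_const_mul]
    apply mul_le_mul_of_nonneg_left _ (Real.exp_nonneg _)
    have hmono : (∫ t in Ioi (1:ℝ), t ^ (2*μ-1) * Real.exp (-(3*r'/4 * t)))
        ≤ ∫ t in Ioi (0:ℝ), t ^ (2*μ-1) * Real.exp (-(3*r'/4 * t)) := by
      apply setIntegral_mono_set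
      · exact aux_integrableOn_Ioi0 (by linarith) (by linarith)
      · filter_upwards [ae_restrict_mem measurableSet_Ioi] with x hx
        have : (0:ℝ) < x := hx
        positivity
      · exact HasSubset.Subset.eventuallyLE (Ioi_subset_Ioi zero_le_one)
    exact hmono.trans (le_of_eq (Real.integral_rpow_mul_exp_neg_mul_Ioi
      (a := 2*μ) (r := 3*r'/4) (by linarith) (by linarith)))
  have hdom : ∀ t ∈ Ioi (1:ℝ), Real.exp (-r' * t) * (t ^ 2 - 1) ^ a ≤ g1 t + g2 t := by
    intro t ht
    have ht1 : (1:ℝ) < t := ht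
    have htpos : (0:ℝ) < t := by linarith
    have hg1nn : 0 ≤ g1 t := by
      rw [hg1]
      have : (0:ℝ) ≤ t - 1 := by linarith
      positivity
    have hg2nn : 0 ≤ g2 t := by
      rw [hg2]; positivity
    rcases le_or_gt t 2 with ht2 | ht2
    · -- t ∈ (1,2]: dominate by g1
      refine le_trans ?_ (le_add_of_nonneg_right hg2nn)
      rw [hg1]
      have hfact : t ^ 2 - 1 = (t - 1) * (t + 1) := by ring
      rw [hfact, Real.mul_rpow (by linarith) (by linarith)]
      have hexp : Real.exp (-r' * t) = Real.exp (-r') * Real.exp (-(r' * (t-1))) := by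
        rw [← Real.exp_add]; congr 1; ring
      rw [hexp]
      have h3 : (t + 1) ^ a ≤ 3 ^ a := Real.rpow_le_rpow (by linarith) (by linarith) ha0
      calc Real.exp (-r') * Real.exp (-(r' * (t-1))) * ((t-1) ^ a * (t+1) ^ a)
          ≤ Real.exp (-r') * Real.exp (-(r' * (t-1))) * ((t-1) ^ a * 3 ^ a) := by
            apply mul_le_mul_of_nonneg_left
            · exact mul_le_mul_of_nonneg_left h3 (Real.rpow_nonneg (by linarith) _)
            · positivity
        _ = 3 ^ a * Real.exp (-r') * ((t-1) ^ a * Real.exp (-(r' * (t-1)))) := by ring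
    · -- t > 2: dominate by g2
      refine le_trans ?_ (le_add_of_nonneg_left hg1nn)
      rw [hg2]
      have hpow : (t ^ 2 - 1) ^ a ≤ t ^ (2*μ-1) := by
        have h1 : (t ^ 2 - 1) ^ a ≤ (t ^ 2) ^ a :=
          Real.rpow_le_rpow (by nlinarith) (by nlinarith) ha0
        refine h1.trans (le_of_eq ?_)
        rw [← Real.rpow_natCast t 2, ← Real.rpow_mul htpos.le]
        congr 1
        rw [ha]
        push_cast
        ring
      have hexp : Real.exp (-r' * t) ≤ Real.exp (-r'/2) * Real.exp (-(3*r'/4 * t)) := by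
        rw [← Real.exp_add, Real.exp_le_exp]
        nlinarith
      calc Real.exp (-r' * t) * (t ^ 2 - 1) ^ a
          ≤ (Real.exp (-r'/2) * Real.exp (-(3*r'/4 * t))) * t ^ (2*μ-1) := by
            apply mul_le_mul hexp hpow (Real.rpow_nonneg (by nlinarith) _) (by positivity)
        _ = Real.exp (-r'/2) * (t ^ (2*μ-1) * Real.exp (-(3*r'/4 * t))) := by ring
  calc (∫ t in Ioi (1:ℝ), Real.exp (-r' * t) * (t ^ 2 - 1) ^ a)
      ≤ ∫ t in Ioi (1:ℝ), (g1 t + g2 t) := by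
        apply integral_mono_of_nonneg
        · filter_upwards [ae_restrict_mem measurableSet_Ioi] with x hx
          have hx1 : (1:ℝ) < x := hx
          have : (0:ℝ) ≤ x ^ 2 - 1 := by nlinarith
          positivity
        · exact hg1int.add hg2int
        · filter_upwards [ae_restrict_mem measurableSet_Ioi] with x hx
          exact hdom x hx
    _ = (∫ t in Ioi (1:ℝ), g1 t) + ∫ t in Ioi (1:ℝ), g2 t := integral_add hg1int hg2int
    _ ≤ _ := by rw [hval1]; exact add_le_add (le_refl _) hval2

lemma bound_T1 {μ ν r r' : ℝ} (hμ : 1/2 ≤ μ) (hν : 0 < ν) (hνμ : ν ≤ μ) (hr : 0 < r)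
    (hr' : 0 < r') (hrr : 4*r ≤ r') :
    (2 ^ (-μ) * r ^ μ / (Real.sqrt π * Real.Gamma (μ + 1/2)) * (2 * Real.exp r)) *
      (Real.sqrt π * 2 ^ (-μ) * r' ^ μ / Real.Gamma (μ + 1/2) *
        (3 ^ (μ - 1/2) * Real.exp (-r') * ((1/r') ^ (μ + 1/2) * Real.Gamma (μ + 1/2))))
      ≤ 2 * 2 ^ ν * (1/2 : ℝ) ^ μ * (2*r/r') ^ ν * Real.exp (-r'/4) := by
  set G := Real.Gamma (μ + 1/2) with hGdef
  have hG : 0 < G := Real.Gamma_pos_of_pos (by linarith)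
  have hP : (0:ℝ) < Real.sqrt π := Real.sqrt_pos.mpr Real.pi_pos
  have hsup : (r'/2) ^ (μ - 1/2) * Real.exp (-(r'/2)) ≤ G := by
    have h := aux_rpow_exp_le_Gamma (a := μ - 1/2) (y := r'/2) (by linarith) (by linarith)
    have he : μ - 1/2 + 1 = μ + 1/2 := by ring
    rw [he] at h
    exact h
  have e2 : (1/r') ^ (μ + 1/2) = r' ^ (-(μ + 1/2)) := by
    rw [one_div, ← Real.rpow_neg_one r', ← Real.rpow_mul hr'.le]
    ring_nf
  have key : (2 ^ (-μ) * r ^ μ / (Real.sqrt π * G) * (2 * Real.exp r)) *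
      (Real.sqrt π * 2 ^ (-μ) * r' ^ μ / G *
        (3 ^ (μ - 1/2) * Real.exp (-r') * ((1/r') ^ (μ + 1/2) * G)))
      = 2 * 3 ^ (μ - 1/2) * ((2 ^ (-μ) * 2 ^ (-μ)) *
          ((r ^ μ * (r' ^ μ * r' ^ (-(μ + 1/2)))) * (Real.exp r * Real.exp (-r')))) / G := by
    rw [e2]
    field_simp
  rw [key]
  have e1 : (2:ℝ) ^ (-μ) * 2 ^ (-μ) = (4:ℝ) ^ (-μ) := by
    rw [← Real.mul_rpow (by norm_num) (by norm_num)]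
    norm_num
  have e4 : r' ^ μ * r' ^ (-(μ + 1/2)) = r' ^ (-(1/2) : ℝ) := by
    rw [← Real.rpow_add hr']
    ring_nf
  have e3 : Real.exp r * Real.exp (-r') = Real.exp (r - r') := by
    rw [← Real.exp_add]; ring_nf
  rw [e1, e4, e3]
  have b1 : r ^ μ ≤ (2*r/r') ^ ν * (1/2:ℝ) ^ ν * ((4:ℝ) ^ (ν - μ) * r' ^ μ) := by
    have s1 : r ^ μ = r ^ ν * r ^ (μ - ν) := by
      rw [← Real.rpow_add hr]; ring_nf
    have s2 : r ^ (μ - ν) ≤ (r'/4) ^ (μ - ν) :=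
      Real.rpow_le_rpow hr.le (by linarith) (by linarith)
    have s3 : (r'/4) ^ (μ - ν) = r' ^ (μ - ν) * (4:ℝ) ^ (ν - μ) := by
      rw [Real.div_rpow hr'.le (by norm_num), div_eq_mul_inv,
        ← Real.rpow_neg (by norm_num : (0:ℝ) ≤ 4), neg_sub]
    have s4 : r ^ ν = (2*r/r') ^ ν * (1/2:ℝ) ^ ν * r' ^ ν := by
      rw [← Real.mul_rpow (by positivity) (by norm_num),
        ← Real.mul_rpow (by positivity) hr'.le]
      congr 1
      field_simp
    calc r ^ μ = r ^ ν * r ^ (μ - ν) := s1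
      _ ≤ r ^ ν * (r' ^ (μ - ν) * (4:ℝ) ^ (ν - μ)) := by
          rw [← s3]
          exact mul_le_mul_of_nonneg_left s2 (Real.rpow_nonneg hr.le _)
      _ = (2*r/r') ^ ν * (1/2:ℝ) ^ ν * ((4:ℝ) ^ (ν - μ) * (r' ^ ν * r' ^ (μ - ν))) := by
          rw [s4]; ring
      _ = (2*r/r') ^ ν * (1/2:ℝ) ^ ν * ((4:ℝ) ^ (ν - μ) * r' ^ μ) := by
          rw [← Real.rpow_add hr']; ring_nf
  have bexp : Real.exp (r - r') ≤ Real.exp (-(r'/2)) * Real.exp (-(r'/4)) := by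
    rw [← Real.exp_add, Real.exp_le_exp]
    linarith
  calc 2 * 3 ^ (μ - 1/2) * ((4:ℝ) ^ (-μ) *
          ((r ^ μ * r' ^ (-(1/2) : ℝ)) * Real.exp (r - r'))) / G
      ≤ 2 * 3 ^ (μ - 1/2) * ((4:ℝ) ^ (-μ) *
          ((((2*r/r') ^ ν * (1/2:ℝ) ^ ν * ((4:ℝ) ^ (ν - μ) * r' ^ μ)) * r' ^ (-(1/2) : ℝ)) *
            (Real.exp (-(r'/2)) * Real.exp (-(r'/4))))) / G := by
        gcongr
    _ = (2 * 3 ^ (μ - 1/2) * (4:ℝ) ^ (-μ) * (4:ℝ) ^ (ν - μ) * ((2*r/r') ^ ν * (1/2:ℝ) ^ ν)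
          * Real.exp (-(r'/4)) / G) * ((r' ^ μ * r' ^ (-(1/2):ℝ)) * Real.exp (-(r'/2))) := by
        ring
    _ ≤ (2 * 3 ^ (μ - 1/2) * (4:ℝ) ^ (-μ) * (4:ℝ) ^ (ν - μ) * ((2*r/r') ^ ν * (1/2:ℝ) ^ ν)
          * Real.exp (-(r'/4)) / G) * ((2:ℝ) ^ (μ - 1/2) * G) := by
        apply mul_le_mul_of_nonneg_left _ (by positivity)
        have e5 : r' ^ μ * r' ^ (-(1/2):ℝ) = (2:ℝ) ^ (μ - 1/2) * (r'/2) ^ (μ - 1/2) := by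
          rw [← Real.rpow_add hr', ← Real.mul_rpow (by norm_num) (by positivity)]
          congr 1 <;> ring
        rw [e5, mul_assoc]
        exact mul_le_mul_of_nonneg_left hsup (Real.rpow_nonneg (by norm_num) _)
    _ = (2 * ((3:ℝ) ^ (μ - 1/2) * (2:ℝ) ^ (μ - 1/2)) * ((4:ℝ) ^ (-μ) * (4:ℝ) ^ (ν - μ))
          * ((1/2:ℝ) ^ ν)) * (2*r/r') ^ ν * Real.exp (-(r'/4)) := by
        field_simp
    _ ≤ 2 * 2 ^ ν * (1/2 : ℝ) ^ μ * (2*r/r') ^ ν * Real.exp (-r'/4) := by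
        have f1 : (3:ℝ) ^ (μ - 1/2) * (2:ℝ) ^ (μ - 1/2) = (6:ℝ) ^ (μ - 1/2) := by
          rw [← Real.mul_rpow (by norm_num) (by norm_num)]
          norm_num
        have f2 : (4:ℝ) ^ (-μ) * (4:ℝ) ^ (ν - μ) = (4:ℝ) ^ ν * (16:ℝ) ^ (-μ) := by
          have h16 : (16:ℝ) ^ (-μ) = (4:ℝ) ^ ((2:ℝ) * (-μ)) := by
            rw [Real.rpow_mul (by norm_num : (0:ℝ) ≤ 4)]
            congr 1
            rw [show (2:ℝ) = ((2:ℕ):ℝ) by norm_num, Real.rpow_natCast]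
            norm_num
          rw [h16, ← Real.rpow_add (by norm_num : (0:ℝ) < 4),
            ← Real.rpow_add (by norm_num : (0:ℝ) < 4)]
          congr 1
          ring
        have g2 : (4:ℝ) ^ ν * (1/2:ℝ) ^ ν = (2:ℝ) ^ ν := by
          rw [← Real.mul_rpow (by norm_num) (by norm_num)]
          norm_num
        have g1 : (6:ℝ) ^ (μ - 1/2) * (16:ℝ) ^ (-μ) ≤ (1/2:ℝ) ^ μ := by
          have j1 : (6:ℝ) ^ (μ - 1/2) ≤ (6:ℝ) ^ μ :=
            Real.rpow_le_rpow_of_exponent_le (by norm_num) (by linarith)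
          have j2 : (6:ℝ) ^ μ * (16:ℝ) ^ (-μ) = ((3:ℝ)/8) ^ μ := by
            rw [Real.rpow_neg (by norm_num : (0:ℝ) ≤ 16), ← div_eq_mul_inv,
              ← Real.div_rpow (by norm_num) (by norm_num : (0:ℝ) ≤ 16)]
            norm_num
          have j3 : ((3:ℝ)/8) ^ μ ≤ (1/2:ℝ) ^ μ :=
            Real.rpow_le_rpow (by norm_num) (by norm_num) (by linarith)
          calc (6:ℝ) ^ (μ - 1/2) * (16:ℝ) ^ (-μ)
              ≤ (6:ℝ) ^ μ * (16:ℝ) ^ (-μ) := by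
                exact mul_le_mul_of_nonneg_right j1 (Real.rpow_nonneg (by norm_num) _)
            _ = ((3:ℝ)/8) ^ μ := j2
            _ ≤ (1/2:ℝ) ^ μ := j3
        have hA : 2 * ((3:ℝ) ^ (μ - 1/2) * (2:ℝ) ^ (μ - 1/2)) * ((4:ℝ) ^ (-μ) * (4:ℝ) ^ (ν - μ))
            * ((1/2:ℝ) ^ ν) ≤ 2 * 2 ^ ν * (1/2:ℝ) ^ μ := by
          rw [f1, f2]
          calc 2 * (6:ℝ) ^ (μ - 1/2) * ((4:ℝ) ^ ν * (16:ℝ) ^ (-μ)) * ((1/2:ℝ) ^ ν)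
              = 2 * ((4:ℝ) ^ ν * (1/2:ℝ) ^ ν) * ((6:ℝ) ^ (μ - 1/2) * (16:ℝ) ^ (-μ)) := by ring
            _ = 2 * (2:ℝ) ^ ν * ((6:ℝ) ^ (μ - 1/2) * (16:ℝ) ^ (-μ)) := by rw [g2]
            _ ≤ 2 * (2:ℝ) ^ ν * ((1/2:ℝ) ^ μ) := by
                exact mul_le_mul_of_nonneg_left g1 (by positivity)
        have hexpeq : -(r'/4) = -r'/4 := by ring
        rw [hexpeq] at *
        apply mul_le_mul_of_nonneg_right _ (Real.exp_nonneg _)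
        exact mul_le_mul_of_nonneg_right hA (by positivity)

lemma bound_T2 {μ ν r r' : ℝ} (hμ : 1/2 ≤ μ) (hν : 0 < ν) (hνμ : ν ≤ μ) (hr : 0 < r)
    (hr' : 0 < r') (hrr : 4*r ≤ r')
    (hGR : Real.Gamma μ ≤ 16 * Real.Gamma (μ + 1/2)) :
    (2 ^ (-μ) * r ^ μ / (Real.sqrt π * Real.Gamma (μ + 1/2)) * (2 * Real.exp r)) *
      (Real.sqrt π * 2 ^ (-μ) * r' ^ μ / Real.Gamma (μ + 1/2) *
        (Real.exp (-r'/2) * ((1/(3*r'/4)) ^ (2*μ) * Real.Gamma (2*μ))))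
      ≤ 16 * 2 ^ ν * (1/2 : ℝ) ^ μ * (2*r/r') ^ ν * Real.exp (-r'/4) := by
  set G := Real.Gamma (μ + 1/2) with hGdef
  have hG : 0 < G := Real.Gamma_pos_of_pos (by linarith)
  have hGμ : 0 < Real.Gamma μ := Real.Gamma_pos_of_pos (by linarith)
  have hP : (1:ℝ) ≤ Real.sqrt π := by
    rw [show (1:ℝ) = Real.sqrt 1 by simp]
    exact Real.sqrt_le_sqrt (by linarith [Real.pi_gt_three])
  have hP0 : (0:ℝ) < Real.sqrt π := by linarith
  have hdup : Real.Gamma (2*μ) = Real.Gamma μ * G * ((2:ℝ) ^ ((1:ℝ) - 2*μ))⁻¹ * (Real.sqrt π)⁻¹ := by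
    have h := Real.Gamma_mul_Gamma_add_half μ
    have h2 : (0:ℝ) < (2:ℝ) ^ ((1:ℝ) - 2*μ) := Real.rpow_pos_of_pos (by norm_num) _
    have e : Real.Gamma μ * Real.Gamma (μ + 1/2) * (((2:ℝ) ^ ((1:ℝ) - 2*μ))⁻¹ * (Real.sqrt π)⁻¹)
        = Real.Gamma (2*μ) := by
      rw [h]
      field_simp
    rw [hGdef, ← e]
    ring
  have key : (2 ^ (-μ) * r ^ μ / (Real.sqrt π * G) * (2 * Real.exp r)) *
      (Real.sqrt π * 2 ^ (-μ) * r' ^ μ / G *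
        (Real.exp (-r'/2) * ((1/(3*r'/4)) ^ (2*μ) * Real.Gamma (2*μ))))
      = (2 * (2 ^ (-μ) * 2 ^ (-μ) * ((2:ℝ) ^ ((1:ℝ) - 2*μ))⁻¹)) *
          ((Real.exp r * Real.exp (-r'/2)) *
            ((r ^ μ * (r' ^ μ * (1/(3*r'/4)) ^ (2*μ))) * (Real.Gamma μ / (Real.sqrt π * G)))) := by
    rw [hdup]
    have h2 : (0:ℝ) < (2:ℝ) ^ ((1:ℝ) - 2*μ) := Real.rpow_pos_of_pos (by norm_num) _
    field_simp
  rw [key]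
  have c1 : 2 * ((2:ℝ) ^ (-μ) * 2 ^ (-μ) * ((2:ℝ) ^ ((1:ℝ) - 2*μ))⁻¹) = 1 := by
    rw [← Real.rpow_neg (by norm_num : (0:ℝ) ≤ 2) ((1:ℝ) - 2*μ),
      ← Real.rpow_add (by norm_num : (0:ℝ) < 2), ← Real.rpow_add (by norm_num : (0:ℝ) < 2)]
    rw [show -μ + -μ + -((1:ℝ) - 2*μ) = -1 by ring]
    rw [Real.rpow_neg_one]
    norm_num
  rw [c1, one_mul]
  have c2 : Real.exp r * Real.exp (-r'/2) ≤ Real.exp (-r'/4) := by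
    rw [← Real.exp_add, Real.exp_le_exp]
    linarith
  have c3 : r ^ μ * (r' ^ μ * (1/(3*r'/4)) ^ (2*μ)) ≤ 2 ^ ν * (1/2:ℝ) ^ μ * (2*r/r') ^ ν := by
    have w1 : (1/(3*r'/4)) ^ (2*μ) = ((4:ℝ)/3) ^ (2*μ) * (r' ^ (2*μ))⁻¹ := by
      rw [show (1:ℝ)/(3*r'/4) = (4/3) / r' by field_simp]
      rw [Real.div_rpow (by norm_num) hr'.le, div_eq_mul_inv]
    have w2 : r' ^ μ * (r' ^ (2*μ))⁻¹ = (r' ^ μ)⁻¹ := by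
      rw [← Real.rpow_neg hr'.le, ← Real.rpow_add hr',
        show μ + -(2*μ) = -μ by ring, Real.rpow_neg hr'.le]
    have w3 : ((4:ℝ)/3) ^ (2*μ) = ((16:ℝ)/9) ^ μ := by
      rw [Real.rpow_mul (by norm_num : (0:ℝ) ≤ 4/3) 2 μ]
      congr 1
      rw [show (2:ℝ) = ((2:ℕ):ℝ) by norm_num, Real.rpow_natCast]
      norm_num
    have w4 : r ^ μ * (r' ^ μ)⁻¹ = (r/r') ^ μ := by
      rw [Real.div_rpow hr.le hr'.le, div_eq_mul_inv]
    have hq : (0:ℝ) < r / r' := by positivity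
    have w5 : (r/r') ^ μ = (r/r') ^ ν * (r/r') ^ (μ - ν) := by
      rw [← Real.rpow_add hq]
      ring_nf
    have w6 : (r/r') ^ (μ - ν) ≤ ((1:ℝ)/4) ^ (μ - ν) := by
      apply Real.rpow_le_rpow hq.le _ (by linarith)
      rw [div_le_div_iff₀ hr' (by norm_num)]
      linarith
    have w7 : ((16:ℝ)/9) ^ μ * ((1:ℝ)/4) ^ (μ - ν) = ((4:ℝ)/9) ^ μ * (4:ℝ) ^ ν := by
      rw [Real.rpow_sub (by norm_num : (0:ℝ) < 1/4)]
      rw [show ((1:ℝ)/4) ^ ν = ((4:ℝ) ^ ν)⁻¹ by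
        rw [one_div, Real.inv_rpow (by norm_num : (0:ℝ) ≤ 4)]]
      rw [div_inv_eq_mul]
      rw [show ((16:ℝ)/9) ^ μ * (((1:ℝ)/4) ^ μ * (4:ℝ) ^ ν)
        = (((16:ℝ)/9) ^ μ * ((1:ℝ)/4) ^ μ) * (4:ℝ) ^ ν by ring]
      rw [← Real.mul_rpow (by norm_num) (by norm_num)]
      norm_num
    have w8 : ((4:ℝ)/9) ^ μ ≤ ((1:ℝ)/2) ^ μ :=
      Real.rpow_le_rpow (by norm_num) (by norm_num) (by linarith)
    have w9 : (r/r') ^ ν * (4:ℝ) ^ ν = (2*r/r') ^ ν * (2:ℝ) ^ ν := by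
      rw [← Real.mul_rpow (by positivity) (by norm_num),
        ← Real.mul_rpow (by positivity) (by norm_num)]
      congr 1
      field_simp
      ring
    calc r ^ μ * (r' ^ μ * (1/(3*r'/4)) ^ (2*μ))
        = ((16:ℝ)/9) ^ μ * (r/r') ^ μ := by
          rw [w1]
          rw [show r ^ μ * (r' ^ μ * (((4:ℝ)/3) ^ (2*μ) * (r' ^ (2*μ))⁻¹))
            = ((4:ℝ)/3) ^ (2*μ) * (r ^ μ * (r' ^ μ * (r' ^ (2*μ))⁻¹)) by ring, w2, w3, w4]
      _ = ((16:ℝ)/9) ^ μ * ((r/r') ^ ν * (r/r') ^ (μ - ν)) := by rw [w5]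
      _ ≤ ((16:ℝ)/9) ^ μ * ((r/r') ^ ν * ((1:ℝ)/4) ^ (μ - ν)) := by
          apply mul_le_mul_of_nonneg_left _ (Real.rpow_nonneg (by norm_num) _)
          exact mul_le_mul_of_nonneg_left w6 (Real.rpow_nonneg hq.le _)
      _ = (((16:ℝ)/9) ^ μ * ((1:ℝ)/4) ^ (μ - ν)) * (r/r') ^ ν := by ring
      _ = (((4:ℝ)/9) ^ μ * (4:ℝ) ^ ν) * (r/r') ^ ν := by rw [w7]
      _ = ((4:ℝ)/9) ^ μ * ((r/r') ^ ν * (4:ℝ) ^ ν) := by ring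
      _ = ((4:ℝ)/9) ^ μ * ((2*r/r') ^ ν * (2:ℝ) ^ ν) := by rw [w9]
      _ ≤ ((1:ℝ)/2) ^ μ * ((2*r/r') ^ ν * (2:ℝ) ^ ν) := by
          apply mul_le_mul_of_nonneg_right w8 (by positivity)
      _ = 2 ^ ν * (1/2:ℝ) ^ μ * (2*r/r') ^ ν := by ring
  have c4 : Real.Gamma μ / (Real.sqrt π * G) ≤ 16 := by
    rw [div_le_iff₀ (by positivity)]
    nlinarith [hGR, hG, hP]
  calc (Real.exp r * Real.exp (-r'/2)) *
        ((r ^ μ * (r' ^ μ * (1/(3*r'/4)) ^ (2*μ))) * (Real.Gamma μ / (Real.sqrt π * G)))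
      ≤ Real.exp (-r'/4) * ((2 ^ ν * (1/2:ℝ) ^ μ * (2*r/r') ^ ν) * 16) := by
        apply mul_le_mul c2 _ _ (Real.exp_nonneg _)
        · exact mul_le_mul c3 c4 (div_nonneg hGμ.le (by positivity)) (by positivity)
        · apply mul_nonneg (by positivity) (div_nonneg hGμ.le (by positivity))
    _ = 16 * 2 ^ ν * (1/2 : ℝ) ^ μ * (2*r/r') ^ ν * Real.exp (-r'/4) := by ring

lemma aux_summable {μs : ℕ → ℝ} {C : ℝ} (hC : 0 < C) (hμhalf : ∀ j, (1/2:ℝ) ≤ μs j) (n : ℕ)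
    (hcount : ∀ j : ℕ, ((j:ℝ) + 1) ≤ C * (μs j + 2) ^ n) :
    Summable (fun j : ℕ => (μs j) ^ n * ((1:ℝ)/2) ^ (μs j)) := by
  set K : ℝ := (((3*n).factorial : ℕ) : ℝ) * 8 ^ n * (C^2 * 25 ^ n) with hK
  have hq : (1/2:ℝ) ≤ Real.log 2 := by
    have := Real.log_two_gt_d9
    linarith
  have hbound : ∀ j : ℕ, (μs j) ^ n * ((1:ℝ)/2) ^ (μs j) ≤ K / ((j:ℝ) + 1) ^ 2 := by
    intro j
    set μ := μs j with hμdef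
    have hμ : (1/2:ℝ) ≤ μ := hμhalf j
    have hμ0 : (0:ℝ) < μ := by linarith
    set q := Real.log 2 with hqdef
    have hq0 : (0:ℝ) < q := by linarith
    have hA : ((1:ℝ)/2) ^ μ = Real.exp (-(q * μ)) := by
      rw [Real.rpow_def_of_pos (by norm_num : (0:ℝ) < 1/2), one_div, Real.log_inv]
      ring_nf
      rw [hqdef, mul_comm]
    have hfact : (q * μ) ^ (3*n) ≤ (((3*n).factorial : ℕ) : ℝ) * Real.exp (q * μ) := by
      have h := Real.pow_div_factorial_le_exp (x := q * μ) (by positivity) (3*n)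
      have hf : (0:ℝ) < (((3*n).factorial : ℕ) : ℝ) := by positivity
      rw [div_le_iff₀ hf] at h
      linarith [h]
    -- E1 : q^(3n) * (μ^(2n) * (μ^n * exp(-(qμ)))) ≤ (3n)!
    have E1 : q ^ (3*n) * (μ ^ (2*n) * (μ ^ n * Real.exp (-(q * μ)))) ≤ (((3*n).factorial : ℕ) : ℝ) := by
      have hmul : (q * μ) ^ (3*n) * Real.exp (-(q * μ))
          ≤ (((3*n).factorial : ℕ) : ℝ) * Real.exp (q * μ) * Real.exp (-(q * μ)) :=
        mul_le_mul_of_nonneg_right hfact (Real.exp_nonneg _)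
      have hcancel : Real.exp (q * μ) * Real.exp (-(q * μ)) = 1 := by
        rw [← Real.exp_add]; simp
      have hexpand : (q * μ) ^ (3*n) = q ^ (3*n) * (μ ^ (2*n) * μ ^ n) := by
        rw [mul_pow, ← pow_add]
        congr 2
        ring
      calc q ^ (3*n) * (μ ^ (2*n) * (μ ^ n * Real.exp (-(q * μ))))
          = (q * μ) ^ (3*n) * Real.exp (-(q * μ)) := by rw [hexpand]; ring
        _ ≤ (((3*n).factorial : ℕ) : ℝ) * Real.exp (q * μ) * Real.exp (-(q * μ)) := hmul
        _ = (((3*n).factorial : ℕ) : ℝ) := by rw [mul_assoc, hcancel, mul_one]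
    have E3 : ((1:ℝ)/2) ^ (3*n) ≤ q ^ (3*n) := pow_le_pow_left₀ (by norm_num) hq _
    have hP0 : (0:ℝ) ≤ μ ^ n * Real.exp (-(q * μ)) := by positivity
    have hM0 : (0:ℝ) < μ ^ (2*n) := by positivity
    have E4 : μ ^ (2*n) * (μ ^ n * Real.exp (-(q * μ))) ≤ (((3*n).factorial : ℕ) : ℝ) * 8 ^ n := by
      have h1 : ((1:ℝ)/2) ^ (3*n) * (μ ^ (2*n) * (μ ^ n * Real.exp (-(q * μ))))
          ≤ (((3*n).factorial : ℕ) : ℝ) :=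
        le_trans (mul_le_mul_of_nonneg_right E3 (by positivity)) E1
      have h2 : ((1:ℝ)/2) ^ (3*n) = ((8:ℝ) ^ n)⁻¹ := by
        rw [pow_mul]
        norm_num
        rw [← inv_pow]
        norm_num
      rw [h2, inv_mul_le_iff₀ (by positivity)] at h1
      linarith [h1]
    have E2 : ((j:ℝ) + 1) ^ 2 ≤ C^2 * (25 ^ n * μ ^ (2*n)) := by
      have h1 : ((j:ℝ) + 1) ^ 2 ≤ (C * (μ + 2) ^ n) ^ 2 := by
        apply pow_le_pow_left₀ (by positivity) (hcount j)
      have h2 : (μ + 2) ≤ 5 * μ := by linarith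
      have h3 : ((μ + 2) ^ n) ^ 2 = (μ + 2) ^ (2*n) := by
        rw [← pow_mul]
        ring_nf
      have h4 : (μ + 2) ^ (2*n) ≤ (5*μ) ^ (2*n) :=
        pow_le_pow_left₀ (by linarith) h2 _
      have h5 : (5*μ) ^ (2*n) = 25 ^ n * μ ^ (2*n) := by
        rw [mul_pow, pow_mul]
        norm_num
      calc ((j:ℝ) + 1) ^ 2 ≤ (C * (μ + 2) ^ n) ^ 2 := h1
        _ = C^2 * ((μ + 2) ^ n) ^ 2 := by ring
        _ = C^2 * (μ + 2) ^ (2*n) := by rw [h3]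
        _ ≤ C^2 * (25 ^ n * μ ^ (2*n)) := by
            rw [← h5]
            exact mul_le_mul_of_nonneg_left h4 (by positivity)
    rw [hA, le_div_iff₀ (by positivity : (0:ℝ) < ((j:ℝ) + 1) ^ 2)]
    calc μ ^ n * Real.exp (-(q * μ)) * ((j:ℝ) + 1) ^ 2
        ≤ μ ^ n * Real.exp (-(q * μ)) * (C^2 * (25 ^ n * μ ^ (2*n))) := by
          exact mul_le_mul_of_nonneg_left E2 hP0
      _ = (C^2 * 25 ^ n) * (μ ^ (2*n) * (μ ^ n * Real.exp (-(q * μ)))) := by ring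
      _ ≤ (C^2 * 25 ^ n) * ((((3*n).factorial : ℕ) : ℝ) * 8 ^ n) := by
          exact mul_le_mul_of_nonneg_left E4 (by positivity)
      _ = K := by rw [hK]; ring
  have hsum2 : Summable (fun j : ℕ => K / ((j:ℝ) + 1) ^ 2) := by
    have hbase : Summable (fun j : ℕ => 1 / ((j:ℝ)) ^ 2) := by
      have := Real.summable_one_div_nat_pow (p := 2)
      exact this.mpr (by norm_num)
    have hshift : Summable (fun j : ℕ => 1 / ((j:ℝ) + 1) ^ 2) := by
      have := (summable_nat_add_iff 1).mpr hbase
      refine this.congr fun j => ?_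
      push_cast
      ring
    simpa [div_eq_mul_inv] using hshift.mul_left K
  apply Summable.of_nonneg_of_le _ hbound hsum2
  intro j
  have := hμhalf j
  positivity

lemma prod_bound {μ ν r r' : ℝ} (hμ : 1/2 ≤ μ) (hν : 0 < ν) (hνμ : ν ≤ μ) (hr : 0 < r)
    (hr' : 0 < r') (hrr : 4*r ≤ r') :
    besselI μ r * besselK μ r' ≤ 18 * 2 ^ ν * (1/2:ℝ) ^ μ * (2*r/r') ^ ν * Real.exp (-r'/4) := by
  have hG : 0 < Real.Gamma (μ + 1/2) := aux_Gamma_half_pos hμ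
  have hP : (0:ℝ) < Real.sqrt π := Real.sqrt_pos.mpr Real.pi_pos
  have hIb0 : 0 ≤ 2 ^ (-μ) * r ^ μ / (Real.sqrt π * Real.Gamma (μ + 1/2)) * (2 * Real.exp r) := by
    positivity
  calc besselI μ r * besselK μ r'
      ≤ (2 ^ (-μ) * r ^ μ / (Real.sqrt π * Real.Gamma (μ + 1/2)) * (2 * Real.exp r)) *
        ((Real.sqrt π * 2 ^ (-μ) * r' ^ μ / Real.Gamma (μ + 1/2)) *
          (3 ^ (μ - 1/2) * Real.exp (-r') * ((1/r') ^ (μ + 1/2) * Real.Gamma (μ + 1/2))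
            + Real.exp (-r'/2) * ((1/(3*r'/4)) ^ (2*μ) * Real.Gamma (2*μ)))) := by
        exact mul_le_mul (besselI_le hμ hr) (besselK_le hμ hr') (besselK_nonneg hμ hr') hIb0
    _ = (2 ^ (-μ) * r ^ μ / (Real.sqrt π * Real.Gamma (μ + 1/2)) * (2 * Real.exp r)) *
          (Real.sqrt π * 2 ^ (-μ) * r' ^ μ / Real.Gamma (μ + 1/2) *
            (3 ^ (μ - 1/2) * Real.exp (-r') * ((1/r') ^ (μ + 1/2) * Real.Gamma (μ + 1/2))))
        + (2 ^ (-μ) * r ^ μ / (Real.sqrt π * Real.Gamma (μ + 1/2)) * (2 * Real.exp r)) *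
          (Real.sqrt π * 2 ^ (-μ) * r' ^ μ / Real.Gamma (μ + 1/2) *
            (Real.exp (-r'/2) * ((1/(3*r'/4)) ^ (2*μ) * Real.Gamma (2*μ)))) := by
        ring
    _ ≤ 2 * 2 ^ ν * (1/2:ℝ) ^ μ * (2*r/r') ^ ν * Real.exp (-r'/4)
        + 16 * 2 ^ ν * (1/2:ℝ) ^ μ * (2*r/r') ^ ν * Real.exp (-r'/4) :=
        add_le_add (bound_T1 hμ hν hνμ hr hr' hrr)
          (bound_T2 hμ hν hνμ hr hr' hrr (aux_Gamma_ratio hμ))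
    _ = 18 * 2 ^ ν * (1/2:ℝ) ^ μ * (2*r/r') ^ ν * Real.exp (-r'/4) := by ring

/-- Let `d ≥ 3`, let `(μ_j)` be a nondecreasing sequence of reals with
`μ_j ≥ 1/2` and `μ_0 > 0`, satisfying the Weyl-type counting bound `#{j : μ_j ≤ m} ≤ C·m^{d-1}`
for `m > 1`, and let `u_j : Ω → ℂ` satisfy `|u_j(y)| ≤ C·μ_j^{(d-1)/2}`. Then there is `C' > 0`
such that for all `y, y' ∈ Ω` and `r' ≥ 4r > 0` the series
`∑_j |u_j(y)|·|u_j(y')|·I_{μ_j}(r)·K_{μ_j}(r')` converges with sum at most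
`C' · (2r/r')^{μ_0} · e^{-r'/4}`. -/
theorem statement12 (d : ℕ) (hd : 3 ≤ d) (μs : ℕ → ℝ) (hmono : Monotone μs)
    (hμhalf : ∀ j, (1 / 2 : ℝ) ≤ μs j) (hμ0 : 0 < μs 0)
    (C : ℝ) (hC : 0 < C)
    (hcount : ∀ m : ℝ, 1 < m →
      {j : ℕ | μs j ≤ m}.Finite ∧ (({j : ℕ | μs j ≤ m}.ncard : ℝ) ≤ C * m ^ ((d : ℝ) - 1)))
    {Ω : Type*} (u : ℕ → Ω → ℂ)
    (hu : ∀ (j : ℕ) (y : Ω), ‖u j y‖ ≤ C * (μs j) ^ (((d : ℝ) - 1) / 2)) :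
    ∃ C' : ℝ, 0 < C' ∧ ∀ (y y' : Ω) (r r' : ℝ), 0 < r → 0 < r' → 4 * r ≤ r' →
      Summable (fun j : ℕ =>
        ‖u j y‖ * ‖u j y'‖ * besselI (μs j) r * besselK (μs j) r') ∧
      (∑' j : ℕ,
          ‖u j y‖ * ‖u j y'‖ * besselI (μs j) r * besselK (μs j) r')
        ≤ C' * (2 * r / r') ^ (μs 0) * Real.exp (-r' / 4) := by
  set n : ℕ := d - 1 with hn
  have hDn : (d:ℝ) - 1 = ((n:ℕ):ℝ) := by
    rw [hn]
    push_cast [Nat.cast_sub (by omega : 1 ≤ d)]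
    ring
  have hcount' : ∀ j : ℕ, ((j:ℝ) + 1) ≤ C * (μs j + 2) ^ n := by
    intro j
    have hm : (1:ℝ) < μs j + 2 := by linarith [hμhalf j]
    obtain ⟨hfin, hcard⟩ := hcount _ hm
    have hsub : (↑(Finset.range (j+1)) : Set ℕ) ⊆ {i | μs i ≤ μs j + 2} := by
      intro i hi
      simp only [Finset.coe_range, mem_Iio] at hi
      have : μs i ≤ μs j := hmono (by omega)
      simp only [mem_setOf_eq]
      linarith
    have h1 : (j + 1 : ℕ) ≤ {i | μs i ≤ μs j + 2}.ncard := by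
      have := Set.ncard_le_ncard hsub hfin
      rwa [Set.ncard_coe_finset, Finset.card_range] at this
    have h2 : ((j:ℝ) + 1) ≤ ({i | μs i ≤ μs j + 2}.ncard : ℝ) := by
      exact_mod_cast h1
    have h3 : (μs j + 2) ^ ((d:ℝ) - 1) = (μs j + 2) ^ (n:ℕ) := by
      rw [hDn, Real.rpow_natCast]
    linarith [hcard, h3 ▸ hcard]
  have hsum : Summable (fun j : ℕ => (μs j) ^ n * ((1:ℝ)/2) ^ (μs j)) :=
    aux_summable hC hμhalf n hcount'
  set base : ℕ → ℝ := fun j => (μs j) ^ n * ((1:ℝ)/2) ^ (μs j) with hbase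
  set S : ℝ := ∑' j, base j with hS
  have hS0 : 0 ≤ S := tsum_nonneg (fun j => by
    have := hμhalf j
    positivity)
  set ν : ℝ := μs 0 with hν
  set A : ℝ := 18 * 2 ^ ν with hA
  have hA0 : (0:ℝ) < A := by
    rw [hA]
    positivity
  refine ⟨C^2 * A * (S + 1), by positivity, ?_⟩
  intro y y' r r' hr hr' hrr
  have hrr' : 4 * r ≤ r' := hrr
  set X : ℝ := (2*r/r') ^ ν * Real.exp (-r'/4) with hX
  have hX0 : 0 ≤ X := by
    rw [hX]
    positivity
  have hterm : ∀ j : ℕ, ‖u j y‖ * ‖u j y'‖ * besselI (μs j) r *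
      besselK (μs j) r' ≤ (C^2 * A * base j) * X := by
    intro j
    have hμj : (1/2:ℝ) ≤ μs j := hμhalf j
    have hμjpos : (0:ℝ) < μs j := by linarith
    have huu : ‖u j y‖ * ‖u j y'‖
        ≤ C^2 * (μs j) ^ (n:ℕ) := by
      have h1 := hu j y
      have h2 := hu j y'
      have hX1 : (0:ℝ) ≤ C * (μs j) ^ (((d:ℝ) - 1)/2) := by positivity
      have h3 : ‖u j y‖ * ‖u j y'‖
          ≤ (C * (μs j) ^ (((d:ℝ) - 1)/2)) * (C * (μs j) ^ (((d:ℝ) - 1)/2)) :=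
        mul_le_mul h1 h2 (norm_nonneg _) hX1
      refine h3.trans (le_of_eq ?_)
      rw [show (C * (μs j) ^ (((d:ℝ) - 1)/2)) * (C * (μs j) ^ (((d:ℝ) - 1)/2))
        = C^2 * ((μs j) ^ (((d:ℝ) - 1)/2) * (μs j) ^ (((d:ℝ) - 1)/2)) by ring]
      rw [← Real.rpow_add hμjpos, show ((d:ℝ) - 1)/2 + ((d:ℝ) - 1)/2 = (d:ℝ) - 1 by ring,
        hDn, Real.rpow_natCast]
    have hIK := prod_bound hμj hμ0 (hmono (Nat.zero_le j)) hr hr' hrr'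
    have hIK' : besselI (μs j) r * besselK (μs j) r'
        ≤ A * ((1:ℝ)/2) ^ (μs j) * X := by
      rw [hA, hX]
      calc besselI (μs j) r * besselK (μs j) r'
          ≤ 18 * 2 ^ ν * (1/2:ℝ) ^ (μs j) * (2*r/r') ^ ν * Real.exp (-r'/4) := hIK
        _ = 18 * 2 ^ ν * ((1:ℝ)/2) ^ (μs j) * ((2*r/r') ^ ν * Real.exp (-r'/4)) := by ring
    have hIK0 : 0 ≤ besselI (μs j) r * besselK (μs j) r' :=
      mul_nonneg (besselI_nonneg hμj hr) (besselK_nonneg hμj hr')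
    calc ‖u j y‖ * ‖u j y'‖ * besselI (μs j) r * besselK (μs j) r'
        = (‖u j y‖ * ‖u j y'‖) *
            (besselI (μs j) r * besselK (μs j) r') := by ring
      _ ≤ (C^2 * (μs j) ^ (n:ℕ)) * (A * ((1:ℝ)/2) ^ (μs j) * X) := by
          apply mul_le_mul huu hIK' hIK0 (by positivity)
      _ = (C^2 * A * base j) * X := by
          rw [hbase]
          ring
  have hterm0 : ∀ j : ℕ, 0 ≤ ‖u j y‖ * ‖u j y'‖ * besselI (μs j) r *
      besselK (μs j) r' := by
    intro j
    have hμj : (1/2:ℝ) ≤ μs j := hμhalf j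
    exact mul_nonneg (mul_nonneg (mul_nonneg (norm_nonneg _)
      (norm_nonneg _)) (besselI_nonneg hμj hr)) (besselK_nonneg hμj hr')
  have hRHSsum : Summable (fun j : ℕ => (C^2 * A * base j) * X) :=
    (hsum.mul_left (C^2 * A)).mul_right X
  have hsummable : Summable (fun j : ℕ =>
      ‖u j y‖ * ‖u j y'‖ * besselI (μs j) r * besselK (μs j) r') :=
    Summable.of_nonneg_of_le hterm0 hterm hRHSsum
  refine ⟨hsummable, ?_⟩
  have htsum : (∑' j : ℕ, ‖u j y‖ * ‖u j y'‖ * besselI (μs j) r *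
      besselK (μs j) r') ≤ ∑' j : ℕ, (C^2 * A * base j) * X :=
    Summable.tsum_le_tsum hterm hsummable hRHSsum
  have heval : (∑' j : ℕ, (C^2 * A * base j) * X) = (C^2 * A * X) * S := by
    rw [show (fun j : ℕ => (C^2 * A * base j) * X) = fun j : ℕ => (C^2 * A * X) * base j by
      funext j; ring]
    rw [tsum_mul_left, hS]
  refine htsum.trans ?_
  rw [heval]
  have hfin : (C^2 * A * X) * S ≤ (C^2 * A * (S + 1)) * X := by
    have h1 : C^2 * A * S ≤ C^2 * A * (S + 1) := by nlinarith
    calc (C^2 * A * X) * S = (C^2 * A * S) * X := by ring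
      _ ≤ (C^2 * A * (S + 1)) * X := mul_le_mul_of_nonneg_right h1 hX0
  refine hfin.trans (le_of_eq ?_)
  rw [hX]
  ring
end
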